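/- In the coupling of the segregation processes on the ring C_n and on the disjoint-cycles graph G, the expected number of tainted nodes at any time t ≥ 0 satisfies E[|D(t)|] ≤ e^{12wt/n} · ((2w−1)/L) · n, and moreover the probability that |D(t)|/n > 2·e^{12wt/n}·(2w−1)/L is at most exp(−wn/(36L²)). -/

import Mathlib

open MeasureTheory ProbabilityTheory
open scoped ENNReal NNReal

namespace Schelling

/-- Labels: `true` = type `x`, `false` = type `o`.
A configuration on the ring of `n` nodes assigns a label to each node. -/
abbrev Config (n : ℕ) := ZMod n → Bool

/-- The ±1 value of a label: `x ↦ +1`, `o ↦ -1`. -/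
def xval (b : Bool) : ℤ := if b then 1 else -1

/-- A node `i` is happy (tolerance τ = 1/2) if at least `w` of its `2w` nearest
neighbours `i ± 1, …, i ± w` carry the same label as `i`. -/
def happy (w : ℕ) {n : ℕ} (c : Config n) (i : ZMod n) : Prop :=
  w ≤ ∑ k ∈ Finset.Icc 1 w,
      ((if c (i + (k : ZMod n)) = c i then 1 else 0) +
       (if c (i - (k : ZMod n)) = c i then 1 else 0))

instance (w : ℕ) {n : ℕ} (c : Config n) (i : ZMod n) : Decidable (happy w c i) :=
  Nat.decLe _ _

/-- The result of exchanging the labels of nodes `i` and `j`. -/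
def doSwap {n : ℕ} (c : Config n) (i j : ZMod n) : Config n :=
  Function.update (Function.update c i (c j)) j (c i)

/-- One step of the dynamics: the proposed pair `p` swaps labels iff both nodes are
unhappy and carry opposite labels. -/
def swapStep (w : ℕ) {n : ℕ} (c : Config n) (p : ZMod n × ZMod n) : Config n :=
  if ¬ happy w c p.1 ∧ ¬ happy w c p.2 ∧ c p.1 ≠ c p.2 then doSwap c p.1 p.2 else c

/-- The trajectory of the segregation process started from `c0`, where `pr t` is the
pair of nodes proposed for a swap at time `t`. -/
def traj (w : ℕ) {n : ℕ} (c0 : Config n) (pr : ℕ → ZMod n × ZMod n) : ℕ → Config n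
  | 0 => c0
  | t + 1 => swapStep w (traj w c0 pr t) (pr t)

/-- A configuration is frozen if it contains no pair of unhappy, oppositely labeled
nodes, so that no further swaps are possible. -/
def Frozen (w : ℕ) {n : ℕ} (c : Config n) : Prop :=
  ∀ i j : ZMod n, ¬(¬ happy w c i ∧ ¬ happy w c j ∧ c i ≠ c j)

/-- `c'` is obtained from `c` by one legal swap: two distinct unhappy, oppositely
labeled nodes exchange labels. -/
def LegalSwap (w : ℕ) {n : ℕ} (c c' : Config n) : Prop :=
  ∃ i j : ZMod n, i ≠ j ∧ ¬ happy w c i ∧ ¬ happy w c j ∧ c i ≠ c j ∧ c' = doSwap c i j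

/-- The block of `len` consecutive nodes starting at `s` is monochromatic. -/
def MonochromaticBlock {n : ℕ} (c : Config n) (s : ZMod n) (len : ℕ) : Prop :=
  ∀ k < len, c (s + (k : ZMod n)) = c s

/-- A firewall is a monochromatic block of at least `w + 1` consecutive nodes. -/
def HasFirewall (w : ℕ) {n : ℕ} (c : Config n) : Prop :=
  ∃ (s : ZMod n) (len : ℕ), w + 1 ≤ len ∧ MonochromaticBlock c s len

/-- Node `i` belongs to some firewall of `c`. -/
def InFirewall (w : ℕ) {n : ℕ} (c : Config n) (i : ZMod n) : Prop :=
  ∃ (s : ZMod n) (len : ℕ), w + 1 ≤ len ∧ MonochromaticBlock c s len ∧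
    ∃ k < len, i = s + (k : ZMod n)

instance (n : ℕ) : MeasurableSpace (ZMod n) := ⊤

/-- The uniform probability measure on a finite set `s`. -/
noncomputable def uniformOn {α : Type*} [MeasurableSpace α] (s : Finset α) : Measure α :=
  (s.card : ℝ≥0∞)⁻¹ • ∑ a ∈ s, Measure.dirac a

/-- Unordered proposals are modeled as ordered pairs of distinct nodes. -/
def distinctPairs (n : ℕ) [NeZero n] : Finset (ZMod n × ZMod n) :=
  Finset.univ.filter fun p => p.1 ≠ p.2

/-- The uniform distribution of the initial configuration. -/
noncomputable def configMeasure (n : ℕ) [NeZero n] : Measure (Config n) :=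
  uniformOn (Finset.univ : Finset (Config n))

/-- The uniform distribution of a proposed pair. -/
noncomputable def pairMeasure (n : ℕ) [NeZero n] : Measure (ZMod n × ZMod n) :=
  uniformOn (distinctPairs n)

/-- `(init, prop)` is a realization of the segregation process randomness: for every
finite horizon `T`, the initial configuration together with the first `T` proposals is
distributed as (uniform configuration) × (i.i.d. uniform distinct pairs). -/
def IsSchellingProcess (n : ℕ) [NeZero n] {Ω : Type*} [MeasurableSpace Ω]
    (μ : Measure Ω) (init : Ω → Config n) (prop : ℕ → Ω → ZMod n × ZMod n) : Prop :=
  ∀ T : ℕ, Measure.map (fun ω => (init ω, fun t : Fin T => prop t ω)) μ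
      = (configMeasure n).prod (Measure.pi fun _ : Fin T => pairMeasure n)

/-- The x-bias of node `i`: the sum of the ±1 values over the window `i - w, …, i + w`. -/
def bias (w : ℕ) {n : ℕ} (c : Config n) (i : ZMod n) : ℤ :=
  xval (c i) + ∑ k ∈ Finset.Icc 1 w,
    (xval (c (i + (k : ZMod n))) + xval (c (i - (k : ZMod n))))

/-- An x-firewall incubator: a block `F` of `len` consecutive nodes starting at `s`,
made of a left defender (first `w+1` nodes), an internal block, and a right defender
(last `w+1` nodes), such that every node of `F` has x-bias `> √w`, the minimum bias on
the left defender is attained at its left endpoint, and the minimum bias on the right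
defender is attained at its right endpoint. -/
def IsIncubator (w : ℕ) {n : ℕ} (c : Config n) (s : ZMod n) (len : ℕ) : Prop :=
  2 * (w + 1) ≤ len ∧
  (∀ k < len, Real.sqrt w < ((bias w c (s + (k : ZMod n)) : ℤ) : ℝ)) ∧
  (∀ k < w + 1, bias w c s ≤ bias w c (s + (k : ZMod n))) ∧
  (∀ k < w + 1,
    bias w c (s + ((len - 1 : ℕ) : ZMod n)) ≤ bias w c (s + ((len - 1 - k : ℕ) : ZMod n)))

/-- The sum of the first `j` entries of a ±1 sequence. -/
def chiPrefix {m : ℕ} (B : Fin m → Bool) (j : ℕ) : ℤ :=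
  ∑ i : Fin m, if (i : ℕ) < j then xval (B i) else 0

/-- The total sum of a ±1 sequence. -/
def chi {m : ℕ} (B : Fin m → Bool) : ℤ := ∑ i : Fin m, xval (B i)

/-- The sum of the last `j` entries of a ±1 sequence. -/
def chiSuffix {m : ℕ} (B : Fin m → Bool) (j : ℕ) : ℤ :=
  ∑ i : Fin m, if m - j ≤ (i : ℕ) then xval (B i) else 0

/-- A sequence `B ∈ {±1}^w` is x-promoting if `χ(B) ≥ 5√w` and for all `1 ≤ j ≤ w`,
`χ_j(B) > -2√w` and `χ_{-j}(B) > -2√w`. -/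
def XPromoting (w : ℕ) (B : Fin w → Bool) : Prop :=
  5 * Real.sqrt w ≤ ((chi B : ℤ) : ℝ) ∧
  ∀ j : ℕ, 1 ≤ j → j ≤ w →
    (-2) * Real.sqrt w < ((chiPrefix B j : ℤ) : ℝ) ∧
    (-2) * Real.sqrt w < ((chiSuffix B j : ℤ) : ℝ)

/-- The concatenation of the three length-`w` sequences `B, B', B''`, as a function on
positions `0, …, 3w - 1`. -/
def concat3 (w : ℕ) (B B' B'' : Fin w → Bool) (i : ℕ) : Bool :=
  if h : i < w then B ⟨i, h⟩
  else if h' : i < 2 * w then B' ⟨i - w, by omega⟩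
  else if h'' : i < 3 * w then B'' ⟨i - 2 * w, by omega⟩
  else false

/-- The sign sequences of length `a + b` containing exactly `a` entries `+1`
(i.e. `true`) and `b` entries `-1` (i.e. `false`). -/
def ballotSeqs (a b : ℕ) : Finset (Fin (a + b) → Bool) :=
  Finset.univ.filter fun f => (Finset.univ.filter fun i => f i = true).card = a

/-- Node `i` is, at time `t`, selected to participate in a proposed swap together with
an unhappy, oppositely labeled node. -/
def selectedWith (w : ℕ) {n : ℕ} (c0 : Config n) (pr : ℕ → ZMod n × ZMod n)
    (i : ZMod n) (t : ℕ) : Prop :=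
  ((pr t).1 = i ∧ ¬ happy w (traj w c0 pr t) (pr t).2 ∧
      traj w c0 pr t (pr t).2 ≠ traj w c0 pr t i) ∨
  ((pr t).2 = i ∧ ¬ happy w (traj w c0 pr t) (pr t).1 ∧
      traj w c0 pr t (pr t).1 ≠ traj w c0 pr t i)

/-- The satisfaction time of node `i`: the first time at which `i` is selected in a
proposed swap together with an unhappy, oppositely labeled node (`∞` if never). -/
noncomputable def satTime (w : ℕ) {n : ℕ} (c0 : Config n) (pr : ℕ → ZMod n × ZMod n)
    (i : ZMod n) : ℕ∞ :=
  sInf {t : ℕ∞ | ∃ t' : ℕ, t = (t' : ℕ∞) ∧ selectedWith w c0 pr i t'}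

/-- Node `i` is impatient at time `t` if it is unhappy at time `t` and `t ≤ t*_i`. -/
def Impatient (w : ℕ) {n : ℕ} (c0 : Config n) (pr : ℕ → ZMod n × ZMod n)
    (i : ZMod n) (t : ℕ) : Prop :=
  ¬ happy w (traj w c0 pr t) i ∧ (t : ℕ∞) ≤ satTime w c0 pr i

/-- The left combatants of the block starting at `s`: the nodes of the left attacker
`A_L = {s - w, …, s - 1}` initially labeled `x`, together with the nodes of the left
defender `D_L = {s, …, s + w}` initially labeled `o`. -/
def leftCombatants (w : ℕ) {n : ℕ} [NeZero n] (c0 : Config n) (s : ZMod n) :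
    Finset (ZMod n) :=
  ((Finset.Icc 1 w).image fun k : ℕ => s - (k : ZMod n)).filter (fun i => c0 i = true) ∪
  ((Finset.range (w + 1)).image fun k : ℕ => s + (k : ZMod n)).filter (fun i => c0 i = false)

/-- The right combatants of the block of length `len` starting at `s`: the nodes of the
right attacker `A_R = {s + len, …, s + len + w - 1}` initially labeled `x`, together
with the nodes of the right defender `D_R = {s + len - 1 - w, …, s + len - 1}` initially
labeled `o`. -/
def rightCombatants (w : ℕ) {n : ℕ} [NeZero n] (c0 : Config n) (s : ZMod n) (len : ℕ) :
    Finset (ZMod n) :=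
  ((Finset.range w).image fun k : ℕ => s + ((len + k : ℕ) : ZMod n)).filter
      (fun i => c0 i = true) ∪
  ((Finset.range (w + 1)).image fun k : ℕ => s + ((len - 1 - k : ℕ) : ZMod n)).filter
      (fun i => c0 i = false)

/-- `l` is a pseudo-transcript of the combatant set `C` relative to time `t0`: it
enumerates `C` without repetitions, all combatants with satisfaction time `> t0` come
first (in an arbitrary order, corresponding to an arbitrary permutation of their
signs), and the remaining combatants are listed in decreasing order of satisfaction
time. -/
def IsPseudoTranscript (w : ℕ) {n : ℕ} (c0 : Config n) (pr : ℕ → ZMod n × ZMod n)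
    (t0 : ℕ) (C : Finset (ZMod n)) (l : List (ZMod n)) : Prop :=
  l.Nodup ∧ l.toFinset = C ∧
  ∀ p q : Fin l.length, (p : ℕ) < (q : ℕ) →
    ((t0 : ℕ∞) < satTime w c0 pr (l.get q) → (t0 : ℕ∞) < satTime w c0 pr (l.get p)) ∧
    (satTime w c0 pr (l.get q) ≤ (t0 : ℕ∞) → satTime w c0 pr (l.get p) ≤ (t0 : ℕ∞) →
      satTime w c0 pr (l.get q) ≤ satTime w c0 pr (l.get p))

/-- All partial sums of the sign sequence associated to the list `l` (where each node
contributes the ±1 value of its initial label) are nonnegative. -/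
def NonnegPartialSums {n : ℕ} (c0 : Config n) (l : List (ZMod n)) : Prop :=
  ∀ m ≤ l.length, 0 ≤ ((l.take m).map fun i => xval (c0 i)).sum

/-- Nodes `i` and `j` belong to the same monochromatic run of `c`. -/
def sameRun {n : ℕ} (c : Config n) (i j : ZMod n) : Prop :=
  ∃ k : ℕ, ((j = i + (k : ZMod n)) ∧ ∀ m ≤ k, c (i + (m : ZMod n)) = c i) ∨
           ((j = i - (k : ZMod n)) ∧ ∀ m ≤ k, c (i - (m : ZMod n)) = c i)

/-- The length of the monochromatic run of `c` containing node `i`. -/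
noncomputable def runLength {n : ℕ} (c : Config n) (i : ZMod n) : ℕ :=
  Nat.card {j : ZMod n // sameRun c i j}

/-- The number of unhappy nodes with label `b`. -/
noncomputable def unhappyCount (w : ℕ) {n : ℕ} (c : Config n) (b : Bool) : ℕ :=
  Nat.card {i : ZMod n // c i = b ∧ ¬ happy w c i}

/-- The number of impatient nodes at time `t`. -/
noncomputable def impatientCount (w : ℕ) {n : ℕ} (c0 : Config n)
    (pr : ℕ → ZMod n × ZMod n) (t : ℕ) : ℕ :=
  Nat.card {i : ZMod n // Impatient w c0 pr i t}

/-- The absolute difference between the numbers of unhappy `x`'s and unhappy `o`'s. -/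
noncomputable def unhappyImbalance (w : ℕ) {n : ℕ} (c : Config n) : ℝ :=
  |(unhappyCount w c true : ℝ) - (unhappyCount w c false : ℝ)|

/-- The earliest time at which fewer than `bound` nodes are impatient (`∞` if never). -/
noncomputable def firstFewImpatient (w : ℕ) {n : ℕ} (c0 : Config n)
    (pr : ℕ → ZMod n × ZMod n) (bound : ℝ) : ℕ∞ :=
  sInf {t : ℕ∞ | ∃ t' : ℕ, t = (t' : ℕ∞) ∧ (impatientCount w c0 pr t' : ℝ) < bound}

/-- The earliest time at which the numbers of unhappy `x`'s and unhappy `o`'s differ by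
more than `bound` (`∞` if never). -/
noncomputable def firstImbalance (w : ℕ) {n : ℕ} (c0 : Config n)
    (pr : ℕ → ZMod n × ZMod n) (bound : ℝ) : ℕ∞ :=
  sInf {t : ℕ∞ | ∃ t' : ℕ, t = (t' : ℕ∞) ∧ bound < unhappyImbalance w (traj w c0 pr t')}

/-- In the disjoint-cycles graph `G` (cycles of length `L`), the node reached from `i`
by moving `k` steps forward inside `i`'s cycle. -/
def gnbr (L : ℕ) {n : ℕ} (i : ZMod n) (k : ℕ) : ZMod n :=
  (((i.val / L) * L + ((i.val % L + k) % L) : ℕ) : ZMod n)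

/-- Happiness with respect to the disjoint-cycles graph `G`. -/
def ghappy (w L : ℕ) {n : ℕ} (c : Config n) (i : ZMod n) : Prop :=
  w ≤ ∑ k ∈ Finset.Icc 1 w,
      ((if c (gnbr L i k) = c i then 1 else 0) +
       (if c (gnbr L i (L - k)) = c i then 1 else 0))

instance (w L : ℕ) {n : ℕ} (c : Config n) (i : ZMod n) : Decidable (ghappy w L c i) :=
  Nat.decLe _ _

/-- One step of the segregation dynamics on the disjoint-cycles graph `G`. -/
def gswapStep (w L : ℕ) {n : ℕ} (c : Config n) (p : ZMod n × ZMod n) : Config n :=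
  if ¬ ghappy w L c p.1 ∧ ¬ ghappy w L c p.2 ∧ c p.1 ≠ c p.2 then doSwap c p.1 p.2 else c

/-- The trajectory of the process on `G`, coupled with the ring process by using the
same initial configuration and the same proposed pairs. -/
def gtraj (w L : ℕ) {n : ℕ} (c0 : Config n) (pr : ℕ → ZMod n × ZMod n) : ℕ → Config n
  | 0 => c0
  | t + 1 => gswapStep w L (gtraj w L c0 pr t) (pr t)

/-- The set of nodes within `w` steps of `i` in either graph (including `i`). -/
def nbhd (w L : ℕ) {n : ℕ} (i : ZMod n) : Set (ZMod n) :=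
  {j | ∃ k ≤ w, j = i + (k : ZMod n) ∨ j = i - (k : ZMod n) ∨
        j = gnbr L i k ∨ j = gnbr L i (L - k)}

open Classical in
/-- The tainted set `D(t)`: initially the nodes whose residue mod `L` lies in
`{-w+1, …, w-1}`; whenever a proposed pair touches a tainted node, all nodes within `w`
steps (in either graph) of either member of the pair become tainted. -/
noncomputable def tainted (w L : ℕ) {n : ℕ} (pr : ℕ → ZMod n × ZMod n) :
    ℕ → Set (ZMod n)
  | 0 => {i | i.val % L < w ∨ L - w < i.val % L}
  | t + 1 =>
      if (pr t).1 ∈ tainted w L pr t ∨ (pr t).2 ∈ tainted w L pr t then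
        tainted w L pr t ∪ nbhd w L (pr t).1 ∪ nbhd w L (pr t).2
      else tainted w L pr t

section Aux

open Finset

variable {n : ℕ} [NeZero n]

/-- The initially tainted set. -/
def bad0 (w L : ℕ) {n : ℕ} : Set (ZMod n) := {i | i.val % L < w ∨ L - w < i.val % L}

open Classical in
/-- One step of the tainting process. -/
noncomputable def tstep (w L : ℕ) {n : ℕ} (D : Set (ZMod n)) (a : ZMod n × ZMod n) :
    Set (ZMod n) :=
  if a.1 ∈ D ∨ a.2 ∈ D then D ∪ nbhd w L a.1 ∪ nbhd w L a.2 else D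

lemma tainted_zero (w L : ℕ) (pr : ℕ → ZMod n × ZMod n) :
    tainted w L pr 0 = bad0 w L := rfl

lemma tainted_succ (w L : ℕ) (pr : ℕ → ZMod n × ZMod n) (t : ℕ) :
    tainted w L pr (t + 1) = tstep w L (tainted w L pr t) (pr t) := rfl

lemma tainted_congr (w L : ℕ) (pr pr' : ℕ → ZMod n × ZMod n) (t : ℕ)
    (h : ∀ u < t, pr u = pr' u) : tainted w L pr t = tainted w L pr' t := by
  induction t with
  | zero => rfl
  | succ t ih =>
      have h1 : tainted w L pr t = tainted w L pr' t :=
        ih fun u hu => h u (Nat.lt_succ_of_lt hu)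
      rw [tainted_succ, tainted_succ, h1, h t (Nat.lt_succ_self t)]

lemma bad0_subset_tainted (w L : ℕ) (pr : ℕ → ZMod n × ZMod n) (t : ℕ) :
    bad0 w L ⊆ tainted w L pr t := by
  induction t with
  | zero => exact subset_rfl
  | succ t ih =>
      rw [tainted_succ, tstep]
      split
      · exact ih.trans ((Set.subset_union_left).trans Set.subset_union_left)
      · exact ih

lemma subset_tstep (w L : ℕ) (D : Set (ZMod n)) (a : ZMod n × ZMod n) :
    D ⊆ tstep w L D a := by
  rw [tstep]; split
  · exact (Set.subset_union_left).trans Set.subset_union_left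
  · exact subset_rfl

end Aux
section Aux2
set_option linter.unusedSectionVars false

variable {n : ℕ} [NeZero n]

lemma cast_val (i : ZMod n) : ((i.val : ℕ) : ZMod n) = i :=
  ZMod.natCast_rightInverse i

lemma res_cast (L : ℕ) (hdvd : L ∣ n) (a : ℕ) : ((a : ZMod n)).val % L = a % L := by
  rw [ZMod.val_natCast]; exact Nat.mod_mod_of_dvd a hdvd

lemma add_nat (i : ZMod n) (k : ℕ) : i + (k : ZMod n) = ((i.val + k : ℕ) : ZMod n) := by
  push_cast [cast_val]; ring

lemma sub_nat (i : ZMod n) (k : ℕ) (h : k ≤ i.val) :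
    i - (k : ZMod n) = ((i.val - k : ℕ) : ZMod n) := by
  rw [Nat.cast_sub h, cast_val]

lemma sub_nat' (i : ZMod n) (k : ℕ) (h : k ≤ n) :
    i - (k : ZMod n) = ((i.val + (n - k) : ℕ) : ZMod n) := by
  push_cast [cast_val, Nat.cast_sub h, ZMod.natCast_self]; ring

lemma mul_add_mod'' (a b c : ℕ) : (a * b + c) % b = c % b := by
  rw [Nat.mul_comm, Nat.mul_add_mod]

lemma gnbr_def (L : ℕ) (i : ZMod n) (k : ℕ) :
    gnbr L i k = (((i.val / L) * L + ((i.val % L + k) % L) : ℕ) : ZMod n) := rfl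

/-- The fundamental case analysis for members of `nbhd`. -/
lemma mem_nbhd_cases (w L : ℕ) (hw : 1 ≤ w) (hL : 2 * w < L) (hdvd : L ∣ n)
    (i j : ZMod n) (hj : j ∈ nbhd w L i) :
    j ∈ bad0 w L ∨ (∃ k ≤ w, j = i + (k : ZMod n) ∨ j = i - (k : ZMod n)) ∨
      (i.val % L = 0 ∧ j = gnbr L i (L - w)) := by
  obtain ⟨k, hk, hcase⟩ := hj
  have hL0 : 0 < L := by omega
  have hqm : i.val / L * L + i.val % L = i.val := Nat.div_add_mod' i.val L
  have hmL : i.val % L < L := Nat.mod_lt _ hL0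
  have hres : ∀ r : ℕ, (((i.val / L * L + r : ℕ) : ZMod n)).val % L = r % L := by
    intro r; rw [res_cast L hdvd, mul_add_mod'']
  rcases hcase with h | h | h | h
  · right; left; exact ⟨k, hk, Or.inl h⟩
  · right; left; exact ⟨k, hk, Or.inr h⟩
  · rw [gnbr_def] at h
    by_cases hlt : i.val % L + k < L
    · right; left; refine ⟨k, hk, Or.inl ?_⟩
      rw [add_nat, h, Nat.mod_eq_of_lt hlt]
      congr 1; omega
    · left
      have h1 : (i.val % L + k) % L = i.val % L + k - L := by
        rw [Nat.mod_eq_sub_mod (by omega), Nat.mod_eq_of_lt (by omega)]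
      have h2 : j.val % L = i.val % L + k - L := by
        rw [h, hres, h1, Nat.mod_eq_of_lt (by omega)]
      left; omega
  · rw [gnbr_def] at h
    by_cases hkm : k ≤ i.val % L
    · right; left; refine ⟨k, hk, Or.inr ?_⟩
      have h1 : (i.val % L + (L - k)) % L = i.val % L - k := by
        have e : i.val % L + (L - k) = L + (i.val % L - k) := by omega
        rw [e, Nat.add_mod_left, Nat.mod_eq_of_lt (by omega)]
      rw [sub_nat i k (le_trans hkm (Nat.mod_le _ _)), h, h1]
      congr 1; omega
    · push_neg at hkm
      by_cases hkw : k - i.val % L < w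
      · left
        have h1 : (i.val % L + (L - k)) % L = i.val % L + L - k := by
          rw [Nat.mod_eq_of_lt (by omega)]; omega
        have h2 : j.val % L = i.val % L + L - k := by
          rw [h, hres, h1, Nat.mod_eq_of_lt (by omega)]
        right; omega
      · right; right
        have hk' : k = w := by omega
        have hm0 : i.val % L = 0 := by omega
        subst hk'
        exact ⟨hm0, by rw [h, gnbr_def]⟩

/-- Nodes strictly inside the window around a block-boundary node are initially
tainted. -/
lemma ring_bad (w L : ℕ) (hw : 1 ≤ w) (hL : 2 * w < L) (hdvd : L ∣ n) (hn : L ≤ n)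
    (i : ZMod n) (hm : i.val % L = 0) (k : ℕ) (hk : k < w) :
    i + (k : ZMod n) ∈ bad0 w L ∧ i - (k : ZMod n) ∈ bad0 w L := by
  obtain ⟨c, hc⟩ := hdvd
  have hc' : n = c * L := by rw [hc, Nat.mul_comm]
  have hc1 : 1 ≤ c := by
    rcases Nat.eq_zero_or_pos c with h0 | h0
    · rw [h0] at hc'; simp at hc'; exact absurd hc' (NeZero.ne n)
    · exact h0
  obtain ⟨d, hd⟩ : L ∣ i.val := Nat.dvd_of_mod_eq_zero hm
  have hd' : i.val = d * L := by rw [hd, Nat.mul_comm]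
  constructor
  · rw [add_nat]
    have key : i.val + k = d * L + k := by omega
    have : ((i.val + k : ℕ) : ZMod n).val % L = k := by
      rw [res_cast L ⟨c, hc⟩, key, mul_add_mod'', Nat.mod_eq_of_lt (by omega)]
    exact Or.inl (by rw [this]; omega)
  · rw [sub_nat' i k (by omega)]
    rcases Nat.eq_zero_or_pos k with hk0 | hk0
    · subst hk0
      have key : i.val + (n - 0) = (d + c) * L + 0 := by
        have h3 : (d + c) * L = d * L + c * L := Nat.add_mul d c L
        omega
      have : ((i.val + (n - 0) : ℕ) : ZMod n).val % L = 0 := by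
        rw [res_cast L ⟨c, hc⟩, key, mul_add_mod'', Nat.zero_mod]
      exact Or.inl (by rw [this]; omega)
    · have key : i.val + (n - k) = (d + (c - 1)) * L + (L - k) := by
        have h3 : (d + (c - 1)) * L = d * L + (c - 1) * L := Nat.add_mul _ _ _
        have h4 : (c - 1) * L + L = c * L := by
          have h5 : (c - 1) + 1 = c := by omega
          calc (c - 1) * L + L = ((c - 1) + 1) * L := by rw [Nat.succ_mul]
          _ = c * L := by rw [h5]
        omega
      have : ((i.val + (n - k) : ℕ) : ZMod n).val % L = L - k := by
        rw [res_cast L ⟨c, hc⟩, key, mul_add_mod'', Nat.mod_eq_of_lt (by omega)]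
      exact Or.inr (by rw [this]; omega)

end Aux2
section Aux3
set_option linter.unusedSectionVars false
open Finset

variable {n : ℕ} [NeZero n]

/-- The ring window of radius `w` around `i`, as a Finset. -/
def ringF (w : ℕ) (i : ZMod n) : Finset (ZMod n) :=
  {i} ∪ (Finset.Icc 1 w).image (fun k : ℕ => i + (k : ZMod n))
      ∪ (Finset.Icc 1 w).image (fun k : ℕ => i - (k : ZMod n))

lemma card_ringF (w : ℕ) (i : ZMod n) : (ringF w i).card ≤ 2 * w + 1 := by
  have h1 := Finset.card_union_le ({i} ∪ (Finset.Icc 1 w).image (fun k : ℕ => i + (k : ZMod n)))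
    ((Finset.Icc 1 w).image (fun k : ℕ => i - (k : ZMod n)))
  have h2 := Finset.card_union_le ({i} : Finset (ZMod n))
    ((Finset.Icc 1 w).image (fun k : ℕ => i + (k : ZMod n)))
  have h3 := Finset.card_image_le (s := Finset.Icc 1 w) (f := fun k : ℕ => i + (k : ZMod n))
  have h4 := Finset.card_image_le (s := Finset.Icc 1 w) (f := fun k : ℕ => i - (k : ZMod n))
  have h5 : (Finset.Icc 1 w).card = w := by rw [Nat.card_Icc]; omega
  rw [ringF]
  simp only [Finset.card_singleton] at *
  omega

lemma mem_ringF (w : ℕ) (i : ZMod n) (k : ℕ) (hk : k ≤ w) :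
    i + (k : ZMod n) ∈ ringF w i ∧ i - (k : ZMod n) ∈ ringF w i := by
  rcases Nat.eq_zero_or_pos k with h0 | h0
  · subst h0
    simp [ringF]
  · constructor
    · exact Finset.mem_union_left _ (Finset.mem_union_right _
        (Finset.mem_image.2 ⟨k, Finset.mem_Icc.2 ⟨h0, hk⟩, rfl⟩))
    · exact Finset.mem_union_right _
        (Finset.mem_image.2 ⟨k, Finset.mem_Icc.2 ⟨h0, hk⟩, rfl⟩)

lemma nbhd_diff_ncard (w L : ℕ) (hw : 1 ≤ w) (hL : 2 * w < L) (hdvd : L ∣ n)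
    (D : Set (ZMod n)) (hD : bad0 w L ⊆ D) (i : ZMod n) :
    (nbhd w L i \ D).ncard ≤ 2 * w + 1 := by
  have hLn : L ≤ n := Nat.le_of_dvd (Nat.pos_of_ne_zero (NeZero.ne n)) hdvd
  by_cases hm : i.val % L = 0
  · have hsub : nbhd w L i \ D ⊆
        {i + (w : ZMod n), i - (w : ZMod n), gnbr L i (L - w)} := by
      rintro j ⟨hj, hjD⟩
      rcases mem_nbhd_cases w L hw hL hdvd i j hj with hb | ⟨k, hk, hr⟩ | ⟨_, he⟩
      · exact absurd (hD hb) hjD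
      · rcases Nat.lt_or_ge k w with hkw | hkw
        · exfalso
          have := ring_bad w L hw hL hdvd hLn i hm k hkw
          rcases hr with h | h
          · exact hjD (hD (h ▸ this.1))
          · exact hjD (hD (h ▸ this.2))
        · have hkw' : k = w := by omega
          subst hkw'
          rcases hr with h | h
          · exact Or.inl h
          · exact Or.inr (Or.inl h)
      · exact Or.inr (Or.inr he)
    calc (nbhd w L i \ D).ncard
        ≤ ({i + (w : ZMod n), i - (w : ZMod n), gnbr L i (L - w)} : Set (ZMod n)).ncard :=
          Set.ncard_le_ncard hsub (Set.toFinite _)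
      _ ≤ 3 := by
          refine le_trans (Set.ncard_insert_le _ _) ?_
          refine le_trans (Nat.add_le_add_right (Set.ncard_insert_le _ _) 1) ?_
          simp [Set.ncard_singleton]
      _ ≤ 2 * w + 1 := by omega
  · have hsub : nbhd w L i \ D ⊆ (ringF w i : Set (ZMod n)) := by
      rintro j ⟨hj, hjD⟩
      rcases mem_nbhd_cases w L hw hL hdvd i j hj with hb | ⟨k, hk, hr⟩ | ⟨hm0, _⟩
      · exact absurd (hD hb) hjD
      · rcases hr with h | h
        · exact h ▸ (Finset.mem_coe.2 (mem_ringF w i k hk).1)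
        · exact h ▸ (Finset.mem_coe.2 (mem_ringF w i k hk).2)
      · exact absurd hm0 hm
    calc (nbhd w L i \ D).ncard ≤ (ringF w i : Set (ZMod n)).ncard :=
          Set.ncard_le_ncard hsub (Set.toFinite _)
      _ = (ringF w i).card := Set.ncard_coe_finset _
      _ ≤ 2 * w + 1 := card_ringF w i

lemma bad0_eq_coe (w L : ℕ) :
    (bad0 w L : Set (ZMod n)) =
      ↑(Finset.univ.filter fun i : ZMod n => i.val % L < w ∨ L - w < i.val % L) := by
  ext i; simp [bad0]

lemma bad0_ncard (w L : ℕ) (hw : 1 ≤ w) (hL : 2 * w < L) (hdvd : L ∣ n) :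
    (bad0 w L : Set (ZMod n)).ncard ≤ (2 * w - 1) * (n / L) := by
  have hL0 : 0 < L := by omega
  rw [bad0_eq_coe, Set.ncard_coe_finset]
  have hcard : (Finset.univ.filter fun i : ZMod n => i.val % L < w ∨ L - w < i.val % L).card
      ≤ ((Finset.range (n / L)) ×ˢ ((Finset.range w) ∪ (Finset.Ioo (L - w) L))).card := by
    apply Finset.card_le_card_of_injOn (fun i => (i.val / L, i.val % L))
    · intro i hi
      simp only [Finset.mem_coe, Finset.mem_filter] at hi
      refine Finset.mem_product.2 ⟨?_, ?_⟩
      · refine Finset.mem_range.2 ?_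
        rw [Nat.div_lt_iff_lt_mul hL0, Nat.div_mul_cancel hdvd]
        exact ZMod.val_lt i
      · rcases hi.2 with h | h
        · exact Finset.mem_union_left _ (Finset.mem_range.2 h)
        · exact Finset.mem_union_right _ (Finset.mem_Ioo.2 ⟨h, Nat.mod_lt _ hL0⟩)
    · intro i _ j _ hij
      have h1 : i.val = j.val := by
        have e1 := congrArg Prod.fst hij
        have e2 := congrArg Prod.snd hij
        simp only at e1 e2
        have d1 := Nat.div_add_mod' i.val L
        have d2 := Nat.div_add_mod' j.val L
        rw [e1, e2] at d1
        omega
      exact ZMod.val_injective n h1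
  refine le_trans hcard ?_
  rw [Finset.card_product, Finset.card_range]
  have : ((Finset.range w) ∪ (Finset.Ioo (L - w) L)).card ≤ 2 * w - 1 := by
    refine le_trans (Finset.card_union_le _ _) ?_
    rw [Finset.card_range, Nat.card_Ioo]
    omega
  calc (n / L) * ((Finset.range w) ∪ (Finset.Ioo (L - w) L)).card
      ≤ (n / L) * (2 * w - 1) := Nat.mul_le_mul_left _ this
    _ = (2 * w - 1) * (n / L) := Nat.mul_comm _ _

lemma tstep_eq_of_not_touch (w L : ℕ) (D : Set (ZMod n)) (a : ZMod n × ZMod n)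
    (h : ¬(a.1 ∈ D ∨ a.2 ∈ D)) : tstep w L D a = D := by
  rw [tstep, if_neg h]

lemma tstep_ncard_le (w L : ℕ) (hw : 1 ≤ w) (hL : 2 * w < L) (hdvd : L ∣ n)
    (D : Set (ZMod n)) (hD : bad0 w L ⊆ D) (a : ZMod n × ZMod n)
    (h : a.1 ∈ D ∨ a.2 ∈ D) :
    (tstep w L D a).ncard ≤ D.ncard + (4 * w + 2) := by
  rw [tstep, if_pos h]
  · have hsub : D ∪ nbhd w L a.1 ∪ nbhd w L a.2 ⊆
        (D ∪ (nbhd w L a.1 \ D)) ∪ (nbhd w L a.2 \ D) := by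
      intro x hx
      by_cases hxD : x ∈ D
      · exact Or.inl (Or.inl hxD)
      · rcases hx with (hx | hx) | hx
        · exact absurd hx hxD
        · exact Or.inl (Or.inr ⟨hx, hxD⟩)
        · exact Or.inr ⟨hx, hxD⟩
    calc (D ∪ nbhd w L a.1 ∪ nbhd w L a.2).ncard
        ≤ ((D ∪ (nbhd w L a.1 \ D)) ∪ (nbhd w L a.2 \ D)).ncard :=
          Set.ncard_le_ncard hsub (Set.toFinite _)
      _ ≤ (D ∪ (nbhd w L a.1 \ D)).ncard + (nbhd w L a.2 \ D).ncard :=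
          Set.ncard_union_le _ _
      _ ≤ (D.ncard + (nbhd w L a.1 \ D).ncard) + (nbhd w L a.2 \ D).ncard :=
          Nat.add_le_add_right (Set.ncard_union_le _ _) _
      _ ≤ (D.ncard + (2 * w + 1)) + (2 * w + 1) := by
          have b1 := nbhd_diff_ncard w L hw hL hdvd D hD a.1
          have b2 := nbhd_diff_ncard w L hw hL hdvd D hD a.2
          omega
      _ = D.ncard + (4 * w + 2) := by omega

end Aux3
section Aux4
set_option linter.unusedSectionVars false
open Finset

variable {n : ℕ} [NeZero n]

/-- The weight of a proposed pair under the uniform distribution. -/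
noncomputable def wgt {n : ℕ} [NeZero n] (a : ZMod n × ZMod n) : ℝ :=
  if a ∈ distinctPairs n then (((distinctPairs n).card : ℝ))⁻¹ else 0

/-- The weight of a finite sequence of proposals. -/
noncomputable def wP {n : ℕ} [NeZero n] {t : ℕ} (v : Fin t → ZMod n × ZMod n) : ℝ :=
  ∏ u, wgt (v u)

/-- Extension of a finite sequence of proposals to an infinite one. -/
def ext {n : ℕ} [NeZero n] {t : ℕ} (v : Fin t → ZMod n × ZMod n) :
    ℕ → ZMod n × ZMod n :=
  fun u => if h : u < t then v ⟨u, h⟩ else (0, 0)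

/-- The tainted set produced by a finite sequence of proposals. -/
noncomputable def Dfin (w L : ℕ) {n : ℕ} [NeZero n] {t : ℕ}
    (v : Fin t → ZMod n × ZMod n) : Set (ZMod n) :=
  tainted w L (ext v) t

lemma wgt_nonneg (a : ZMod n × ZMod n) : 0 ≤ wgt a := by
  rw [wgt]; split
  · positivity
  · exact le_refl 0

lemma wP_nonneg {t : ℕ} (v : Fin t → ZMod n × ZMod n) : 0 ≤ wP v :=
  Finset.prod_nonneg fun u _ => wgt_nonneg (v u)

lemma inner_sum (f : (ZMod n × ZMod n) → ℝ) :
    ∑ a : ZMod n × ZMod n, wgt a * f a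
      = (((distinctPairs n).card : ℝ))⁻¹ * ∑ a ∈ distinctPairs n, f a := by
  have h1 : ∀ a : ZMod n × ZMod n, wgt a * f a =
      if a ∈ distinctPairs n then (((distinctPairs n).card : ℝ))⁻¹ * f a else 0 := by
    intro a; rw [wgt]; split
    · rfl
    · rw [zero_mul]
  rw [Finset.sum_congr rfl fun a _ => h1 a, Finset.sum_ite_mem, Finset.univ_inter,
    Finset.mul_sum]

lemma card_distinctPairs : (distinctPairs n).card = n * n - n := by
  classical
  have hsplit := Finset.card_filter_add_card_filter_not
    (s := (Finset.univ : Finset (ZMod n × ZMod n))) (p := fun a => a.1 ≠ a.2)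
  have hdiag : (Finset.univ.filter fun a : ZMod n × ZMod n => ¬ a.1 ≠ a.2)
      = Finset.univ.image (fun x : ZMod n => (x, x)) := by
    ext a
    simp only [Finset.mem_filter, Finset.mem_univ, true_and, Finset.mem_image,
      not_not]
    constructor
    · intro h; exact ⟨a.1, by obtain ⟨x, y⟩ := a; cases h; rfl⟩
    · rintro ⟨x, hx⟩; rw [← hx]
  have hdiagcard : (Finset.univ.filter fun a : ZMod n × ZMod n => ¬ a.1 ≠ a.2).card = n := by
    rw [hdiag, Finset.card_image_of_injective _ (fun x y h => (Prod.mk.injEq _ _ _ _ ▸ h).1),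
      Finset.card_univ, ZMod.card]
  have huniv : (Finset.univ : Finset (ZMod n × ZMod n)).card = n * n := by
    rw [Finset.card_univ, Fintype.card_prod, ZMod.card]
  rw [distinctPairs]
  omega

open Classical in
lemma touch_card (w L : ℕ) (D : Set (ZMod n)) :
    ((distinctPairs n).filter fun a => a.1 ∈ D ∨ a.2 ∈ D).card
      ≤ 2 * D.ncard * (n - 1) := by
  classical
  have hor : ((distinctPairs n).filter fun a => a.1 ∈ D ∨ a.2 ∈ D)
      ⊆ ((distinctPairs n).filter fun a => a.1 ∈ D)
        ∪ ((distinctPairs n).filter fun a => a.2 ∈ D) := by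
    intro a ha
    rw [Finset.mem_filter] at ha
    rcases ha.2 with h | h
    · exact Finset.mem_union_left _ (Finset.mem_filter.2 ⟨ha.1, h⟩)
    · exact Finset.mem_union_right _ (Finset.mem_filter.2 ⟨ha.1, h⟩)
  have h1 : ∀ (fst : Bool), ((distinctPairs n).filter
        fun a => (if fst then a.1 else a.2) ∈ D).card ≤ D.ncard * (n - 1) := by
    intro fst
    have hsub : ((distinctPairs n).filter fun a => (if fst then a.1 else a.2) ∈ D)
        ⊆ (D.toFinite.toFinset).biUnion
            (fun x => if fst then {x} ×ˢ (Finset.univ.erase x)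
              else (Finset.univ.erase x) ×ˢ {x}) := by
      intro a ha
      rw [Finset.mem_filter, distinctPairs, Finset.mem_filter] at ha
      obtain ⟨⟨-, hne⟩, hmem⟩ := ha
      cases fst
      · simp only [Bool.false_eq_true, if_false] at hmem ⊢
        refine Finset.mem_biUnion.2 ⟨a.2, D.toFinite.mem_toFinset.2 hmem, ?_⟩
        refine Finset.mem_product.2 ⟨Finset.mem_erase.2 ⟨hne, Finset.mem_univ _⟩,
          Finset.mem_singleton_self _⟩
      · simp only [if_true] at hmem ⊢
        refine Finset.mem_biUnion.2 ⟨a.1, D.toFinite.mem_toFinset.2 hmem, ?_⟩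
        refine Finset.mem_product.2 ⟨Finset.mem_singleton_self _,
          Finset.mem_erase.2 ⟨Ne.symm hne, Finset.mem_univ _⟩⟩
    refine le_trans (Finset.card_le_card hsub) ?_
    refine le_trans (Finset.card_biUnion_le) (le_of_eq ?_)
    have hcard : ∀ x : ZMod n, (if fst then {x} ×ˢ (Finset.univ.erase x)
        else (Finset.univ.erase x) ×ˢ {x}).card = n - 1 := by
      intro x
      cases fst
      · simp only [Bool.false_eq_true, if_false, Finset.card_product, Finset.card_singleton,
          Finset.card_erase_of_mem (Finset.mem_univ x), Finset.card_univ, ZMod.card,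
          mul_one]
      · simp only [if_true, Finset.card_product, Finset.card_singleton,
          Finset.card_erase_of_mem (Finset.mem_univ x), Finset.card_univ, ZMod.card,
          one_mul]
    calc ∑ x ∈ D.toFinite.toFinset, (if fst then {x} ×ˢ (Finset.univ.erase x)
          else (Finset.univ.erase x) ×ˢ {x}).card
        = ∑ x ∈ D.toFinite.toFinset, (n - 1) := Finset.sum_congr rfl fun x _ => hcard x
      _ = D.toFinite.toFinset.card * (n - 1) := by rw [Finset.sum_const, smul_eq_mul]
      _ = D.ncard * (n - 1) := by rw [← Set.ncard_eq_toFinset_card D D.toFinite]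
  calc ((distinctPairs n).filter fun a => a.1 ∈ D ∨ a.2 ∈ D).card
      ≤ (((distinctPairs n).filter fun a => a.1 ∈ D)
          ∪ ((distinctPairs n).filter fun a => a.2 ∈ D)).card := Finset.card_le_card hor
    _ ≤ ((distinctPairs n).filter fun a => a.1 ∈ D).card
          + ((distinctPairs n).filter fun a => a.2 ∈ D).card := Finset.card_union_le _ _
    _ ≤ D.ncard * (n - 1) + D.ncard * (n - 1) := Nat.add_le_add (h1 true) (h1 false)
    _ = 2 * D.ncard * (n - 1) := by ring

end Aux4
section Aux5
set_option linter.unusedSectionVars false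
open Finset

variable {n : ℕ} [NeZero n]

lemma exp_sub_one_le {y : ℝ} (h0 : 0 ≤ y) (h1 : 7 * y ≤ 1) :
    Real.exp y - 1 ≤ y + 7/6 * y^2 := by
  have hy1 : y < 1 := by linarith
  have h2 : 1 - y ≤ Real.exp (-y) := by
    have := Real.add_one_le_exp (-y); linarith
  have h3 : Real.exp y * (1 - y) ≤ 1 := by
    have hm := mul_le_mul_of_nonneg_left h2 (le_of_lt (Real.exp_pos y))
    rwa [← Real.exp_add, add_neg_cancel, Real.exp_zero] at hm
  have h4 : (1:ℝ) ≤ (1 + y + 7/6 * y^2) * (1 - y) := by nlinarith [sq_nonneg y]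
  have h5 : Real.exp y * (1 - y) ≤ (1 + y + 7/6 * y^2) * (1 - y) := le_trans h3 h4
  have h6 : Real.exp y ≤ 1 + y + 7/6 * y^2 :=
    le_of_mul_le_mul_right h5 (by linarith : (0:ℝ) < 1 - y)
  linarith

lemma cast_N_eq (hn : 3 ≤ n) : ((distinctPairs n : Finset (ZMod n × ZMod n)).card : ℝ)
    = (n : ℝ) * ((n : ℝ) - 1) := by
  rw [card_distinctPairs]
  have h1 : n ≤ n * n := Nat.le_mul_of_pos_left n (by omega)
  rw [Nat.cast_sub h1]
  push_cast
  ring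

lemma N_pos (hn : 3 ≤ n) :
    (0:ℝ) < ((distinctPairs n : Finset (ZMod n × ZMod n)).card : ℝ) := by
  rw [cast_N_eq hn]
  have : (3:ℝ) ≤ (n:ℝ) := by exact_mod_cast hn
  nlinarith

open Classical in
lemma touch_card_real (w L : ℕ) (hn : 3 ≤ n) (D : Set (ZMod n)) :
    ((((distinctPairs n).filter fun a => a.1 ∈ D ∨ a.2 ∈ D).card : ℕ) : ℝ)
      ≤ 2 * (D.ncard : ℝ) * ((n : ℝ) - 1) := by
  classical
  have h := touch_card w L D
  have h2 : ((2 * D.ncard * (n - 1) : ℕ) : ℝ) = 2 * (D.ncard : ℝ) * ((n:ℝ) - 1) := by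
    rw [Nat.cast_mul, Nat.cast_mul, Nat.cast_sub (by omega : 1 ≤ n)]
    push_cast; ring
  calc ((((distinctPairs n).filter fun a => a.1 ∈ D ∨ a.2 ∈ D).card : ℕ) : ℝ)
      ≤ ((2 * D.ncard * (n - 1) : ℕ) : ℝ) := by exact_mod_cast h
    _ = 2 * (D.ncard : ℝ) * ((n:ℝ) - 1) := h2

lemma step_card (w L : ℕ) (hw : 1 ≤ w) (hL : 2 * w < L) (hdvd : L ∣ n) (hn : 2 * w < n)
    (D : Set (ZMod n)) (hD : bad0 w L ⊆ D) :
    ∑ a : ZMod n × ZMod n, wgt a * ((tstep w L D a).ncard : ℝ)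
      ≤ (1 + 12 * (w:ℝ) / n) * (D.ncard : ℝ) := by
  classical
  have hn3 : 3 ≤ n := by omega
  rw [inner_sum]
  have hd0 : (0:ℝ) ≤ (D.ncard : ℝ) := Nat.cast_nonneg _
  have hterm : ∀ a ∈ distinctPairs n, ((tstep w L D a).ncard : ℝ)
      ≤ (D.ncard : ℝ) + (if a.1 ∈ D ∨ a.2 ∈ D then (4*(w:ℝ)+2) else 0) := by
    intro a _
    by_cases h : a.1 ∈ D ∨ a.2 ∈ D
    · rw [if_pos h]
      have h1 := tstep_ncard_le w L hw hL hdvd D hD a h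
      have h2 : ((tstep w L D a).ncard : ℝ) ≤ ((D.ncard + (4*w+2) : ℕ) : ℝ) := by
        exact_mod_cast h1
      calc ((tstep w L D a).ncard : ℝ) ≤ ((D.ncard + (4*w+2) : ℕ) : ℝ) := h2
        _ = (D.ncard : ℝ) + (4*(w:ℝ)+2) := by push_cast; ring
    · rw [if_neg h, tstep_eq_of_not_touch w L D a h, add_zero]
  have hsum : ∑ a ∈ distinctPairs n, ((tstep w L D a).ncard : ℝ)
      ≤ ((distinctPairs n).card : ℝ) * (D.ncard : ℝ)
        + (4*(w:ℝ)+2) * (((distinctPairs n).filter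
            fun a => a.1 ∈ D ∨ a.2 ∈ D).card : ℝ) := by
    calc ∑ a ∈ distinctPairs n, ((tstep w L D a).ncard : ℝ)
        ≤ ∑ a ∈ distinctPairs n,
            ((D.ncard : ℝ) + (if a.1 ∈ D ∨ a.2 ∈ D then (4*(w:ℝ)+2) else 0)) :=
          Finset.sum_le_sum hterm
      _ = ((distinctPairs n).card : ℝ) * (D.ncard : ℝ)
            + ∑ a ∈ distinctPairs n, (if a.1 ∈ D ∨ a.2 ∈ D then (4*(w:ℝ)+2) else 0) := by
          rw [Finset.sum_add_distrib, Finset.sum_const, nsmul_eq_mul]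
      _ = ((distinctPairs n).card : ℝ) * (D.ncard : ℝ)
            + (4*(w:ℝ)+2) * (((distinctPairs n).filter
                fun a => a.1 ∈ D ∨ a.2 ∈ D).card : ℝ) := by
          congr 1
          rw [← Finset.sum_filter, Finset.sum_const, nsmul_eq_mul, mul_comm]
  have hNpos := N_pos (n := n) hn3
  have hNr := cast_N_eq (n := n) hn3
  have hTr := touch_card_real w L hn3 D
  have hnr : (0:ℝ) < (n:ℝ) := by positivity
  have hn1 : (0:ℝ) < (n:ℝ) - 1 := by
    have : (3:ℝ) ≤ (n:ℝ) := by exact_mod_cast hn3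
    linarith
  have hw1 : (1:ℝ) ≤ (w:ℝ) := by exact_mod_cast hw
  calc (((distinctPairs n).card : ℝ))⁻¹
        * ∑ a ∈ distinctPairs n, ((tstep w L D a).ncard : ℝ)
      ≤ (((distinctPairs n).card : ℝ))⁻¹ *
          (((distinctPairs n).card : ℝ) * (D.ncard : ℝ)
            + (4*(w:ℝ)+2) * (2 * (D.ncard : ℝ) * ((n:ℝ) - 1))) := by
        apply mul_le_mul_of_nonneg_left _ (inv_nonneg.2 (le_of_lt hNpos))
        refine le_trans hsum ?_
        have h3 : (4*(w:ℝ)+2) * (((distinctPairs n).filter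
              fun a => a.1 ∈ D ∨ a.2 ∈ D).card : ℝ)
            ≤ (4*(w:ℝ)+2) * (2 * (D.ncard : ℝ) * ((n:ℝ) - 1)) :=
          mul_le_mul_of_nonneg_left hTr (by positivity)
        linarith
    _ = (D.ncard : ℝ) + (8*(w:ℝ)+4) * (D.ncard : ℝ) / n := by
        rw [hNr]
        field_simp
        ring
    _ ≤ (1 + 12 * (w:ℝ) / n) * (D.ncard : ℝ) := by
        have h1 : (8*(w:ℝ)+4) * (D.ncard : ℝ) / n ≤ 12 * (w:ℝ) * (D.ncard : ℝ) / n := by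
          gcongr
          nlinarith
        have h2 : (1 + 12 * (w:ℝ) / n) * (D.ncard : ℝ)
            = (D.ncard : ℝ) + 12 * (w:ℝ) * (D.ncard : ℝ) / n := by ring
        linarith

lemma step_exp (w L : ℕ) (hw : 1 ≤ w) (hL : 2 * w < L) (hdvd : L ∣ n) (hn : 2 * w < n)
    (D : Set (ZMod n)) (hD : bad0 w L ⊆ D) (θ θ' : ℝ) (hθ'0 : 0 ≤ θ') (hθ'θ : θ' ≤ θ)
    (hθc : θ * (4*(w:ℝ)+2) ≤ 1/7) :
    ∑ a : ZMod n × ZMod n, wgt a * Real.exp (θ' * ((tstep w L D a).ncard : ℝ))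
      ≤ Real.exp (θ' * (1 + (12*(w:ℝ) + 84*(w:ℝ)^2*θ)/n) * (D.ncard : ℝ)) := by
  classical
  have hn3 : 3 ≤ n := by omega
  rw [inner_sum]
  have hd0 : (0:ℝ) ≤ (D.ncard : ℝ) := Nat.cast_nonneg _
  have hw1 : (1:ℝ) ≤ (w:ℝ) := by exact_mod_cast hw
  have hc0 : (0:ℝ) ≤ 4*(w:ℝ)+2 := by positivity
  have hθ0 : 0 ≤ θ := le_trans hθ'0 hθ'θ
  have hy0 : 0 ≤ θ' * (4*(w:ℝ)+2) := mul_nonneg hθ'0 hc0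
  have hyc : θ' * (4*(w:ℝ)+2) ≤ θ * (4*(w:ℝ)+2) := mul_le_mul_of_nonneg_right hθ'θ hc0
  have hy7 : 7 * (θ' * (4*(w:ℝ)+2)) ≤ 1 := by linarith
  have hE1 : 1 ≤ Real.exp (θ' * (4*(w:ℝ)+2)) := Real.one_le_exp hy0
  have hterm : ∀ a ∈ distinctPairs n, Real.exp (θ' * ((tstep w L D a).ncard : ℝ))
      ≤ Real.exp (θ' * (D.ncard : ℝ)) *
        ((if a.1 ∈ D ∨ a.2 ∈ D then (Real.exp (θ' * (4*(w:ℝ)+2)) - 1) else 0) + 1) := by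
    intro a _
    by_cases h : a.1 ∈ D ∨ a.2 ∈ D
    · rw [if_pos h]
      have h1 := tstep_ncard_le w L hw hL hdvd D hD a h
      have h2 : ((tstep w L D a).ncard : ℝ) ≤ (D.ncard : ℝ) + (4*(w:ℝ)+2) := by
        have h3 : ((tstep w L D a).ncard : ℝ) ≤ ((D.ncard + (4*w+2) : ℕ) : ℝ) := by
          exact_mod_cast h1
        calc ((tstep w L D a).ncard : ℝ) ≤ ((D.ncard + (4*w+2) : ℕ) : ℝ) := h3
          _ = (D.ncard : ℝ) + (4*(w:ℝ)+2) := by push_cast; ring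
      have h4 : Real.exp (θ' * ((tstep w L D a).ncard : ℝ))
          ≤ Real.exp (θ' * (D.ncard : ℝ) + θ' * (4*(w:ℝ)+2)) := by
        apply Real.exp_le_exp.2
        calc θ' * ((tstep w L D a).ncard : ℝ) ≤ θ' * ((D.ncard : ℝ) + (4*(w:ℝ)+2)) :=
              mul_le_mul_of_nonneg_left h2 hθ'0
          _ = θ' * (D.ncard : ℝ) + θ' * (4*(w:ℝ)+2) := by ring
      calc Real.exp (θ' * ((tstep w L D a).ncard : ℝ))
          ≤ Real.exp (θ' * (D.ncard : ℝ) + θ' * (4*(w:ℝ)+2)) := h4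
        _ = Real.exp (θ' * (D.ncard : ℝ)) *
              ((Real.exp (θ' * (4*(w:ℝ)+2)) - 1) + 1) := by
            rw [Real.exp_add]; ring
    · rw [if_neg h, tstep_eq_of_not_touch w L D a h, zero_add, mul_one]
  have hsum : ∑ a ∈ distinctPairs n, Real.exp (θ' * ((tstep w L D a).ncard : ℝ))
      ≤ Real.exp (θ' * (D.ncard : ℝ)) *
          (((distinctPairs n).card : ℝ)
            + (((distinctPairs n).filter fun a => a.1 ∈ D ∨ a.2 ∈ D).card : ℝ)
              * (Real.exp (θ' * (4*(w:ℝ)+2)) - 1)) := by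
    calc ∑ a ∈ distinctPairs n, Real.exp (θ' * ((tstep w L D a).ncard : ℝ))
        ≤ ∑ a ∈ distinctPairs n, Real.exp (θ' * (D.ncard : ℝ)) *
            ((if a.1 ∈ D ∨ a.2 ∈ D then (Real.exp (θ' * (4*(w:ℝ)+2)) - 1) else 0) + 1) :=
          Finset.sum_le_sum hterm
      _ = Real.exp (θ' * (D.ncard : ℝ)) *
            ∑ a ∈ distinctPairs n,
              ((if a.1 ∈ D ∨ a.2 ∈ D then (Real.exp (θ' * (4*(w:ℝ)+2)) - 1) else 0) + 1) := by
          rw [Finset.mul_sum]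
      _ = Real.exp (θ' * (D.ncard : ℝ)) *
            (((distinctPairs n).card : ℝ)
              + (((distinctPairs n).filter fun a => a.1 ∈ D ∨ a.2 ∈ D).card : ℝ)
                * (Real.exp (θ' * (4*(w:ℝ)+2)) - 1)) := by
          congr 1
          rw [Finset.sum_add_distrib, Finset.sum_const, nsmul_eq_mul, mul_one,
            ← Finset.sum_filter, Finset.sum_const, nsmul_eq_mul]
          ring
  have hNpos : (0:ℝ) < ((distinctPairs n).card : ℝ) := N_pos hn3
  have hNr := cast_N_eq (n := n) hn3
  have hTr := touch_card_real w L hn3 D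
  have hnr : (0:ℝ) < (n:ℝ) := by positivity
  have hn1 : (0:ℝ) < (n:ℝ) - 1 := by
    have : (3:ℝ) ≤ (n:ℝ) := by exact_mod_cast hn3
    linarith
  have hEy : Real.exp (θ' * (4*(w:ℝ)+2)) - 1
      ≤ θ' * (4*(w:ℝ)+2) + 7/6 * (θ' * (4*(w:ℝ)+2))^2 := exp_sub_one_le hy0 hy7
  have hfactor : (((distinctPairs n).card : ℝ))⁻¹ *
      (((distinctPairs n).card : ℝ)
        + (((distinctPairs n).filter fun a => a.1 ∈ D ∨ a.2 ∈ D).card : ℝ)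
          * (Real.exp (θ' * (4*(w:ℝ)+2)) - 1))
      ≤ 1 + θ' * (12*(w:ℝ) + 84*(w:ℝ)^2*θ) * (D.ncard : ℝ) / n := by
    have hTE : (((distinctPairs n).filter fun a => a.1 ∈ D ∨ a.2 ∈ D).card : ℝ)
        * (Real.exp (θ' * (4*(w:ℝ)+2)) - 1)
        ≤ (2 * (D.ncard : ℝ) * ((n:ℝ) - 1))
          * (θ' * (4*(w:ℝ)+2) + 7/6 * (θ' * (4*(w:ℝ)+2))^2) := by
      apply mul_le_mul hTr hEy (by linarith) (by positivity)
    have hyb : 2 * (θ' * (4*(w:ℝ)+2) + 7/6 * (θ' * (4*(w:ℝ)+2))^2)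
        ≤ θ' * (12*(w:ℝ) + 84*(w:ℝ)^2*θ) := by
      have e1 : 2 * (θ' * (4*(w:ℝ)+2)) ≤ θ' * (12*(w:ℝ)) := by nlinarith
      have e2 : 2 * (7/6 * (θ' * (4*(w:ℝ)+2))^2) ≤ θ' * (84*(w:ℝ)^2*θ) := by
        nlinarith [mul_nonneg hθ'0 hθ0, sq_nonneg ((w:ℝ) - 1), mul_nonneg hy0 hy0,
          mul_le_mul_of_nonneg_left hyc hy0]
      linarith
    rw [mul_add, inv_mul_cancel₀ (ne_of_gt hNpos)]
    have h2 : (((distinctPairs n).card : ℝ))⁻¹ *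
        ((((distinctPairs n).filter fun a => a.1 ∈ D ∨ a.2 ∈ D).card : ℝ)
          * (Real.exp (θ' * (4*(w:ℝ)+2)) - 1))
        ≤ θ' * (12*(w:ℝ) + 84*(w:ℝ)^2*θ) * (D.ncard : ℝ) / n := by
      calc (((distinctPairs n).card : ℝ))⁻¹ *
            ((((distinctPairs n).filter fun a => a.1 ∈ D ∨ a.2 ∈ D).card : ℝ)
              * (Real.exp (θ' * (4*(w:ℝ)+2)) - 1))
          ≤ (((distinctPairs n).card : ℝ))⁻¹ *
              ((2 * (D.ncard : ℝ) * ((n:ℝ) - 1))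
                * (θ' * (4*(w:ℝ)+2) + 7/6 * (θ' * (4*(w:ℝ)+2))^2)) :=
            mul_le_mul_of_nonneg_left hTE (inv_nonneg.2 (le_of_lt hNpos))
        _ = (2 * (θ' * (4*(w:ℝ)+2) + 7/6 * (θ' * (4*(w:ℝ)+2))^2)) * (D.ncard : ℝ) / n := by
            rw [hNr]; field_simp
        _ ≤ θ' * (12*(w:ℝ) + 84*(w:ℝ)^2*θ) * (D.ncard : ℝ) / n := by
            gcongr ?_ / (n:ℝ)
            exact mul_le_mul_of_nonneg_right hyb hd0
    linarith
  calc (((distinctPairs n).card : ℝ))⁻¹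
        * ∑ a ∈ distinctPairs n, Real.exp (θ' * ((tstep w L D a).ncard : ℝ))
      ≤ (((distinctPairs n).card : ℝ))⁻¹ * (Real.exp (θ' * (D.ncard : ℝ)) *
          (((distinctPairs n).card : ℝ)
            + (((distinctPairs n).filter fun a => a.1 ∈ D ∨ a.2 ∈ D).card : ℝ)
              * (Real.exp (θ' * (4*(w:ℝ)+2)) - 1))) :=
        mul_le_mul_of_nonneg_left hsum (inv_nonneg.2 (le_of_lt hNpos))
    _ = Real.exp (θ' * (D.ncard : ℝ)) * ((((distinctPairs n).card : ℝ))⁻¹ *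
          (((distinctPairs n).card : ℝ)
            + (((distinctPairs n).filter fun a => a.1 ∈ D ∨ a.2 ∈ D).card : ℝ)
              * (Real.exp (θ' * (4*(w:ℝ)+2)) - 1))) := by ring
    _ ≤ Real.exp (θ' * (D.ncard : ℝ)) *
          (1 + θ' * (12*(w:ℝ) + 84*(w:ℝ)^2*θ) * (D.ncard : ℝ) / n) :=
        mul_le_mul_of_nonneg_left hfactor (le_of_lt (Real.exp_pos _))
    _ ≤ Real.exp (θ' * (D.ncard : ℝ)) *
          Real.exp (θ' * (12*(w:ℝ) + 84*(w:ℝ)^2*θ) * (D.ncard : ℝ) / n) := by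
        apply mul_le_mul_of_nonneg_left _ (le_of_lt (Real.exp_pos _))
        have := Real.add_one_le_exp (θ' * (12*(w:ℝ) + 84*(w:ℝ)^2*θ) * (D.ncard : ℝ) / n)
        linarith
    _ = Real.exp (θ' * (1 + (12*(w:ℝ) + 84*(w:ℝ)^2*θ)/n) * (D.ncard : ℝ)) := by
        rw [← Real.exp_add]
        congr 1
        field_simp

end Aux5
section Aux6
set_option linter.unusedSectionVars false
open Finset

variable {n : ℕ} [NeZero n]

lemma ext_snoc_lt {t : ℕ} (v : Fin t → ZMod n × ZMod n) (a : ZMod n × ZMod n)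
    (u : ℕ) (hu : u < t) : ext (Fin.snoc v a : Fin (t+1) → _) u = ext v u := by
  rw [ext, ext, dif_pos (Nat.lt_succ_of_lt hu), dif_pos hu]
  have h : (⟨u, Nat.lt_succ_of_lt hu⟩ : Fin (t+1)) = Fin.castSucc ⟨u, hu⟩ := rfl
  rw [h, Fin.snoc_castSucc]

lemma ext_snoc_last {t : ℕ} (v : Fin t → ZMod n × ZMod n) (a : ZMod n × ZMod n) :
    ext (Fin.snoc v a : Fin (t+1) → _) t = a := by
  rw [ext, dif_pos (Nat.lt_succ_self t)]
  have h : (⟨t, Nat.lt_succ_self t⟩ : Fin (t+1)) = Fin.last t := rfl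
  rw [h, Fin.snoc_last]

lemma Dfin_snoc (w L : ℕ) {t : ℕ} (v : Fin t → ZMod n × ZMod n) (a : ZMod n × ZMod n) :
    Dfin w L (Fin.snoc v a : Fin (t+1) → _) = tstep w L (Dfin w L v) a := by
  rw [Dfin, Dfin, tainted_succ]
  rw [ext_snoc_last]
  rw [tainted_congr w L (ext (Fin.snoc v a)) (ext v) t fun u hu => ext_snoc_lt v a u hu]

lemma wP_snoc {t : ℕ} (v : Fin t → ZMod n × ZMod n) (a : ZMod n × ZMod n) :
    wP (Fin.snoc v a : Fin (t+1) → _) = wP v * wgt a := by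
  rw [wP, wP, Fin.prod_univ_castSucc]
  congr 1
  · exact Finset.prod_congr rfl fun u _ => by rw [Fin.snoc_castSucc]
  · rw [Fin.snoc_last]

lemma sum_snoc {t : ℕ} (F : (Fin (t+1) → ZMod n × ZMod n) → ℝ) :
    ∑ v : Fin (t+1) → ZMod n × ZMod n, F v
      = ∑ v : Fin t → ZMod n × ZMod n, ∑ a : ZMod n × ZMod n, F (Fin.snoc v a) := by
  rw [← Equiv.sum_comp (Fin.snocEquiv fun _ => ZMod n × ZMod n) F, Fintype.sum_prod_type]
  rw [Finset.sum_comm]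
  rfl

lemma Dfin_zero (w L : ℕ) (v : Fin 0 → ZMod n × ZMod n) :
    Dfin w L v = bad0 w L := rfl

lemma bad0_subset_Dfin (w L : ℕ) {t : ℕ} (v : Fin t → ZMod n × ZMod n) :
    bad0 w L ⊆ Dfin w L v := bad0_subset_tainted w L (ext v) t

lemma wP_zero (v : Fin 0 → ZMod n × ZMod n) : wP v = 1 := by
  rw [wP]; simp

lemma sum_card_le (w L : ℕ) (hw : 1 ≤ w) (hL : 2 * w < L) (hdvd : L ∣ n)
    (hn : 2 * w < n) (t : ℕ) :
    ∑ v : Fin t → ZMod n × ZMod n, wP v * ((Dfin w L v).ncard : ℝ)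
      ≤ (1 + 12 * (w:ℝ) / n) ^ t * (((bad0 w L : Set (ZMod n))).ncard : ℝ) := by
  induction t with
  | zero =>
      rw [Fintype.sum_unique, wP_zero, Dfin_zero, pow_zero]
  | succ t ih =>
      have hpos : (0:ℝ) ≤ 1 + 12 * (w:ℝ) / n := by positivity
      rw [sum_snoc]
      calc ∑ v : Fin t → ZMod n × ZMod n, ∑ a : ZMod n × ZMod n,
              wP (Fin.snoc v a) * ((Dfin w L (Fin.snoc v a)).ncard : ℝ)
          = ∑ v : Fin t → ZMod n × ZMod n, wP v *
              (∑ a : ZMod n × ZMod n, wgt a * ((tstep w L (Dfin w L v) a).ncard : ℝ)) := by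
            refine Finset.sum_congr rfl fun v _ => ?_
            rw [Finset.mul_sum]
            refine Finset.sum_congr rfl fun a _ => ?_
            rw [wP_snoc, Dfin_snoc]; ring
        _ ≤ ∑ v : Fin t → ZMod n × ZMod n, wP v *
              ((1 + 12 * (w:ℝ) / n) * ((Dfin w L v).ncard : ℝ)) := by
            refine Finset.sum_le_sum fun v _ => ?_
            exact mul_le_mul_of_nonneg_left
              (step_card w L hw hL hdvd hn _ (bad0_subset_Dfin w L v)) (wP_nonneg v)
        _ = (1 + 12 * (w:ℝ) / n) *
              ∑ v : Fin t → ZMod n × ZMod n, wP v * ((Dfin w L v).ncard : ℝ) := by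
            rw [Finset.mul_sum]
            exact Finset.sum_congr rfl fun v _ => by ring
        _ ≤ (1 + 12 * (w:ℝ) / n) *
              ((1 + 12 * (w:ℝ) / n) ^ t * (((bad0 w L : Set (ZMod n))).ncard : ℝ)) :=
            mul_le_mul_of_nonneg_left ih hpos
        _ = (1 + 12 * (w:ℝ) / n) ^ (t+1) * (((bad0 w L : Set (ZMod n))).ncard : ℝ) := by
            ring

lemma sum_exp_le (w L : ℕ) (hw : 1 ≤ w) (hL : 2 * w < L) (hdvd : L ∣ n)
    (hn : 2 * w < n) (θ : ℝ) (hθ0 : 0 ≤ θ) (hθc : θ * (4*(w:ℝ)+2) ≤ 1/7) :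
    ∀ (t : ℕ) (θt : ℝ), 0 ≤ θt →
      θt ≤ θ * Real.exp (-((12*(w:ℝ) + 84*(w:ℝ)^2*θ) * t) / n) →
      ∑ v : Fin t → ZMod n × ZMod n, wP v * Real.exp (θt * ((Dfin w L v).ncard : ℝ))
        ≤ Real.exp (θ * (((bad0 w L : Set (ZMod n))).ncard : ℝ)) := by
  have hκ0 : (0:ℝ) ≤ 12*(w:ℝ) + 84*(w:ℝ)^2*θ := by positivity
  have hnr : (0:ℝ) < (n:ℝ) := by
    have : 0 < n := Nat.pos_of_ne_zero (NeZero.ne n)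
    exact_mod_cast this
  intro t
  induction t with
  | zero =>
      intro θt h0 h1
      rw [Fintype.sum_unique, wP_zero, Dfin_zero, one_mul]
      apply Real.exp_le_exp.2
      apply mul_le_mul_of_nonneg_right _ (Nat.cast_nonneg _)
      simpa using h1
  | succ t ih =>
      intro θt h0 h1
      have hexp1 : Real.exp (-((12*(w:ℝ) + 84*(w:ℝ)^2*θ) * (t+1:ℕ)) / n) ≤ 1 := by
        apply Real.exp_le_one_iff.2
        apply div_nonpos_of_nonpos_of_nonneg _ (le_of_lt hnr)
        simp only [neg_nonpos]
        positivity
      have hθtθ : θt ≤ θ := le_trans h1 (mul_le_of_le_one_right hθ0 hexp1)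
      have hbound : θt * (1 + (12*(w:ℝ) + 84*(w:ℝ)^2*θ)/n)
          ≤ θ * Real.exp (-((12*(w:ℝ) + 84*(w:ℝ)^2*θ) * t) / n) := by
        have e1 : 1 + (12*(w:ℝ) + 84*(w:ℝ)^2*θ)/n
            ≤ Real.exp ((12*(w:ℝ) + 84*(w:ℝ)^2*θ)/n) := by
          have := Real.add_one_le_exp ((12*(w:ℝ) + 84*(w:ℝ)^2*θ)/n)
          linarith
        have e2 : θ * Real.exp (-((12*(w:ℝ) + 84*(w:ℝ)^2*θ) * (t+1:ℕ)) / n)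
            * Real.exp ((12*(w:ℝ) + 84*(w:ℝ)^2*θ)/n)
            = θ * Real.exp (-((12*(w:ℝ) + 84*(w:ℝ)^2*θ) * t) / n) := by
          rw [mul_assoc, ← Real.exp_add]
          congr 2
          push_cast
          field_simp
          ring
        calc θt * (1 + (12*(w:ℝ) + 84*(w:ℝ)^2*θ)/n)
            ≤ (θ * Real.exp (-((12*(w:ℝ) + 84*(w:ℝ)^2*θ) * (t+1:ℕ)) / n))
              * Real.exp ((12*(w:ℝ) + 84*(w:ℝ)^2*θ)/n) := by
              apply mul_le_mul h1 e1 (by positivity) (by positivity)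
          _ = θ * Real.exp (-((12*(w:ℝ) + 84*(w:ℝ)^2*θ) * t) / n) := e2
      rw [sum_snoc]
      calc ∑ v : Fin t → ZMod n × ZMod n, ∑ a : ZMod n × ZMod n,
              wP (Fin.snoc v a) * Real.exp (θt * ((Dfin w L (Fin.snoc v a)).ncard : ℝ))
          = ∑ v : Fin t → ZMod n × ZMod n, wP v *
              (∑ a : ZMod n × ZMod n, wgt a *
                Real.exp (θt * ((tstep w L (Dfin w L v) a).ncard : ℝ))) := by
            refine Finset.sum_congr rfl fun v _ => ?_
            rw [Finset.mul_sum]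
            refine Finset.sum_congr rfl fun a _ => ?_
            rw [wP_snoc, Dfin_snoc]; ring
        _ ≤ ∑ v : Fin t → ZMod n × ZMod n, wP v *
              Real.exp (θt * (1 + (12*(w:ℝ) + 84*(w:ℝ)^2*θ)/n) * ((Dfin w L v).ncard : ℝ)) := by
            refine Finset.sum_le_sum fun v _ => ?_
            exact mul_le_mul_of_nonneg_left
              (step_exp w L hw hL hdvd hn _ (bad0_subset_Dfin w L v) θ θt h0 hθtθ hθc)
              (wP_nonneg v)
        _ ≤ Real.exp (θ * (((bad0 w L : Set (ZMod n))).ncard : ℝ)) := by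
            apply ih (θt * (1 + (12*(w:ℝ) + 84*(w:ℝ)^2*θ)/n))
            · positivity
            · exact hbound

end Aux6
section Aux7
set_option linter.unusedSectionVars false
open MeasureTheory

variable {n : ℕ} [NeZero n]

instance : MeasurableSingletonClass (ZMod n) :=
  ⟨fun _ => MeasurableSpace.measurableSet_top⟩

lemma isProb_uniformOn {α : Type*} [MeasurableSpace α] [MeasurableSingletonClass α]
    (s : Finset α) (hs : s.Nonempty) : IsProbabilityMeasure (uniformOn s) := by
  constructor
  rw [uniformOn, Measure.smul_apply, Measure.finset_sum_apply]
  have h1 : ∑ a ∈ s, Measure.dirac a Set.univ = (s.card : ℝ≥0∞) := by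
    rw [Finset.sum_congr rfl fun a _ => measure_univ, Finset.sum_const, nsmul_eq_mul,
      mul_one]
  rw [h1, smul_eq_mul, ENNReal.inv_mul_cancel]
  · exact_mod_cast Nat.cast_ne_zero.2 (Finset.card_ne_zero.2 hs)
  · exact ENNReal.natCast_ne_top _

lemma zmod_zero_ne_one (hn2 : 2 ≤ n) : (0 : ZMod n) ≠ 1 := by
  intro h
  have h1 : ((0:ℕ) : ZMod n) = ((1:ℕ) : ZMod n) := by
    simpa using h
  have := congrArg ZMod.val h1
  rw [ZMod.val_cast_of_lt (by omega), ZMod.val_cast_of_lt (by omega)] at this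
  omega

lemma distinctPairs_nonempty (hn2 : 2 ≤ n) : (distinctPairs n).Nonempty := by
  refine ⟨((0 : ZMod n), (1 : ZMod n)), ?_⟩
  rw [distinctPairs, Finset.mem_filter]
  exact ⟨Finset.mem_univ _, zmod_zero_ne_one hn2⟩

lemma isProb_pairMeasure (hn2 : 2 ≤ n) : IsProbabilityMeasure (pairMeasure n) :=
  isProb_uniformOn _ (distinctPairs_nonempty hn2)

lemma isProb_configMeasure : IsProbabilityMeasure (configMeasure n) :=
  isProb_uniformOn _ ⟨fun _ => true, Finset.mem_univ _⟩

open Classical in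
lemma pairMeasure_singleton (a : ZMod n × ZMod n) :
    pairMeasure n {a} = if a ∈ distinctPairs n
      then (((distinctPairs n).card : ℝ≥0∞))⁻¹ else 0 := by
  rw [pairMeasure, uniformOn, Measure.smul_apply, Measure.finset_sum_apply]
  have h1 : ∀ b ∈ distinctPairs n, Measure.dirac b ({a} : Set (ZMod n × ZMod n))
      = if b = a then 1 else 0 := by
    intro b _
    rw [Measure.dirac_apply' b (measurableSet_singleton a)]
    by_cases h : b = a
    · rw [if_pos h]
      rw [Set.indicator_of_mem (by simp [h]) 1]
      rfl
    · rw [if_neg h]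
      rw [Set.indicator_of_notMem (by simp [h]) 1]
  rw [Finset.sum_congr rfl h1, Finset.sum_ite_eq' (distinctPairs n) a fun _ => (1:ℝ≥0∞)]
  by_cases h : a ∈ distinctPairs n
  · rw [if_pos h, if_pos h, smul_eq_mul, mul_one]
  · rw [if_neg h, if_neg h, smul_eq_mul, mul_zero]

lemma piMeasure_singleton (hn2 : 2 ≤ n) (t : ℕ) (v : Fin t → ZMod n × ZMod n) :
    (Measure.pi fun _ : Fin t => pairMeasure n) {v} = ENNReal.ofReal (wP v) := by
  haveI := isProb_pairMeasure (n := n) hn2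
  have h0 : ({v} : Set (Fin t → ZMod n × ZMod n)) = Set.univ.pi (fun u => {v u}) :=
    (Set.univ_pi_singleton v).symm
  rw [h0, Measure.pi_pi]
  have h1 : ∀ u : Fin t, pairMeasure n {v u} = ENNReal.ofReal (wgt (v u)) := by
    intro u
    rw [pairMeasure_singleton, wgt]
    by_cases h : v u ∈ distinctPairs n
    · rw [if_pos h, if_pos h]
      rw [ENNReal.ofReal_inv_of_pos]
      · congr 1
        rw [ENNReal.ofReal_natCast]
      · have h2 : (distinctPairs n).Nonempty := distinctPairs_nonempty hn2
        have : 0 < (distinctPairs n).card := Finset.card_pos.2 h2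
        exact_mod_cast this
    · rw [if_neg h, if_neg h, ENNReal.ofReal_zero]
  rw [Finset.prod_congr rfl fun u _ => h1 u]
  rw [← ENNReal.ofReal_prod_of_nonneg fun u _ => wgt_nonneg (v u)]
  rfl

lemma piMeasure_set (hn2 : 2 ≤ n) (t : ℕ) (E : Set (Fin t → ZMod n × ZMod n)) :
    (Measure.pi fun _ : Fin t => pairMeasure n) E
      = ENNReal.ofReal (∑ v ∈ E.toFinite.toFinset, wP v) := by
  haveI := isProb_pairMeasure (n := n) hn2
  have h0 : E = ⋃ v ∈ E.toFinite.toFinset, {v} := by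
    ext x; simp [Set.Finite.mem_toFinset]
  conv_lhs => rw [h0]
  rw [measure_biUnion_finset ?_ fun v _ => measurableSet_singleton v]
  · rw [Finset.sum_congr rfl fun v _ => piMeasure_singleton hn2 t v]
    rw [ENNReal.ofReal_sum_of_nonneg fun v _ => wP_nonneg v]
  · intro x _ y _ hxy
    simp [Function.onFun, Set.disjoint_singleton, hxy]

end Aux7
section Aux8
set_option linter.unusedSectionVars false
open MeasureTheory

variable {n : ℕ} [NeZero n]

lemma tainted_eq_Dfin (w L : ℕ) (pr : ℕ → ZMod n × ZMod n) (t : ℕ) :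
    tainted w L pr t = Dfin w L (fun u : Fin t => pr u) := by
  apply tainted_congr
  intro u hu
  rw [ext, dif_pos hu]

lemma aemeasurable_phi {Ω : Type} [MeasurableSpace Ω] (μ : Measure Ω)
    (init : Ω → Config n) (prop : ℕ → Ω → ZMod n × ZMod n)
    (hproc : IsSchellingProcess n μ init prop) (hn2 : 2 ≤ n) (t : ℕ) :
    AEMeasurable (fun ω => (init ω, fun u : Fin t => prop u ω)) μ := by
  haveI := isProb_pairMeasure (n := n) hn2
  haveI := isProb_configMeasure (n := n)
  by_contra h
  have h0 := Measure.map_of_not_aemeasurable h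
  rw [hproc t] at h0
  have h1 := measure_univ
    (μ := (configMeasure n).prod (Measure.pi fun _ : Fin t => pairMeasure n))
  rw [h0] at h1
  simp at h1

lemma integral_reduction {Ω : Type} [MeasurableSpace Ω] (μ : Measure Ω)
    (init : Ω → Config n) (prop : ℕ → Ω → ZMod n × ZMod n)
    (hproc : IsSchellingProcess n μ init prop) (hn2 : 2 ≤ n) (w L t : ℕ)
    (g : Set (ZMod n) → ℝ) :
    ∫ ω, g (tainted w L (fun u => prop u ω) t) ∂μ
      = ∑ v : Fin t → ZMod n × ZMod n, wP v * g (Dfin w L v) := by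
  haveI := isProb_pairMeasure (n := n) hn2
  haveI := isProb_configMeasure (n := n)
  have hae := aemeasurable_phi μ init prop hproc hn2 t
  have hrw : (fun ω => g (tainted w L (fun u => prop u ω) t))
      = fun ω => (fun x : Config n × (Fin t → ZMod n × ZMod n) => g (Dfin w L x.2))
          ((init ω, fun u : Fin t => prop u ω)) := by
    funext ω
    simp only
    congr 1
    exact tainted_eq_Dfin w L _ t
  rw [hrw]
  have him : ∫ ω, (fun x : Config n × (Fin t → ZMod n × ZMod n) => g (Dfin w L x.2))
        ((init ω, fun u : Fin t => prop u ω)) ∂μ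
      = ∫ x : Config n × (Fin t → ZMod n × ZMod n), g (Dfin w L x.2)
          ∂(Measure.map (fun ω => (init ω, fun u : Fin t => prop u ω)) μ) :=
    (integral_map (f := fun x : Config n × (Fin t → ZMod n × ZMod n) => g (Dfin w L x.2))
      hae (Measurable.aestronglyMeasurable Measurable.of_discrete)).symm
  rw [him, hproc t]
  have hsnd : ∫ x : Config n × (Fin t → ZMod n × ZMod n), g (Dfin w L x.2)
        ∂((configMeasure n).prod (Measure.pi fun _ : Fin t => pairMeasure n))
      = ∫ y, g (Dfin w L y) ∂(Measure.pi fun _ : Fin t => pairMeasure n) := by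
    calc ∫ x : Config n × (Fin t → ZMod n × ZMod n), g (Dfin w L x.2)
          ∂((configMeasure n).prod (Measure.pi fun _ : Fin t => pairMeasure n))
        = ∫ y, g (Dfin w L y) ∂(Measure.map Prod.snd
            ((configMeasure n).prod (Measure.pi fun _ : Fin t => pairMeasure n))) :=
          (integral_map (f := fun y : Fin t → ZMod n × ZMod n => g (Dfin w L y))
            measurable_snd.aemeasurable
            (Measurable.aestronglyMeasurable Measurable.of_discrete)).symm
      _ = ∫ y, g (Dfin w L y) ∂(Measure.pi fun _ : Fin t => pairMeasure n) := by
          rw [Measure.map_snd_prod, measure_univ, one_smul]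
  rw [hsnd]
  rw [integral_fintype Integrable.of_finite]
  refine Finset.sum_congr rfl fun v _ => ?_
  rw [Measure.real, piMeasure_singleton hn2 t v, smul_eq_mul, ENNReal.toReal_ofReal (wP_nonneg v)]

lemma measure_reduction {Ω : Type} [MeasurableSpace Ω] (μ : Measure Ω)
    (init : Ω → Config n) (prop : ℕ → Ω → ZMod n × ZMod n)
    (hproc : IsSchellingProcess n μ init prop) (hn2 : 2 ≤ n) (w L t : ℕ)
    (Q : Set (ZMod n) → Prop) :
    μ {ω | Q (tainted w L (fun u => prop u ω) t)}
      = ENNReal.ofReal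
          (∑ v ∈ ({v : Fin t → ZMod n × ZMod n | Q (Dfin w L v)}).toFinite.toFinset,
            wP v) := by
  haveI := isProb_pairMeasure (n := n) hn2
  haveI := isProb_configMeasure (n := n)
  have hae := aemeasurable_phi μ init prop hproc hn2 t
  have hset : {ω | Q (tainted w L (fun u => prop u ω) t)}
      = (fun ω => (init ω, fun u : Fin t => prop u ω)) ⁻¹'
          (Set.univ ×ˢ {v : Fin t → ZMod n × ZMod n | Q (Dfin w L v)}) := by
    ext ω
    simp only [Set.mem_setOf_eq, Set.mem_preimage, Set.mem_prod, Set.mem_univ, true_and]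
    rw [tainted_eq_Dfin w L _ t]
  rw [hset, ← Measure.map_apply_of_aemeasurable hae
    (DiscreteMeasurableSpace.forall_measurableSet _)]
  rw [hproc t, Measure.prod_prod, measure_univ, one_mul, piMeasure_set hn2]

end Aux8

set_option maxHeartbeats 1000000 in
/-- In the coupling of the segregation processes on `C_n` and on the
disjoint-cycles graph `G`, the expected number of tainted nodes at time `t` is at most
`e^{12wt/n}·((2w - 1)/L)·n`, and the probability that `|D(t)|/n` exceeds
`2·e^{12wt/n}·(2w - 1)/L` is at most `exp(-wn/(36L²))`. -/
theorem tainted_bounds (w L : ℕ) (hw : 1 ≤ w) (hL : 2 * w < L)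
    (n : ℕ) (hdvd : L ∣ n) (hn : 2 * w < n) [NeZero n]
    (Ω : Type) (mΩ : MeasurableSpace Ω) (μ : Measure Ω) (hμ : IsProbabilityMeasure μ)
    (init : Ω → Config n) (prop : ℕ → Ω → ZMod n × ZMod n)
    (hproc : IsSchellingProcess n μ init prop) (t : ℕ) :
    (∫ ω, ((tainted w L (fun u => prop u ω) t).ncard : ℝ) ∂μ
        ≤ Real.exp (12 * (w : ℝ) * (t : ℝ) / (n : ℝ)) * ((2 * (w : ℝ) - 1) / (L : ℝ)) * (n : ℝ)) ∧
    μ {ω | 2 * Real.exp (12 * (w : ℝ) * (t : ℝ) / (n : ℝ)) * ((2 * (w : ℝ) - 1) / (L : ℝ))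
          < ((tainted w L (fun u => prop u ω) t).ncard : ℝ) / (n : ℝ)}
      ≤ ENNReal.ofReal (Real.exp (-((w : ℝ) * (n : ℝ)) / (36 * (L : ℝ) ^ 2))) := by
  classical
  have hn2 : 2 ≤ n := by omega
  have hnr : (0:ℝ) < (n:ℝ) := by exact_mod_cast (by omega : 0 < n)
  have hLr : (0:ℝ) < (L:ℝ) := by exact_mod_cast (by omega : 0 < L)
  have hw1 : (1:ℝ) ≤ (w:ℝ) := by exact_mod_cast hw
  have hwr : (0:ℝ) < (w:ℝ) := by linarith
  have h2w1 : (0:ℝ) < 2*(w:ℝ) - 1 := by linarith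
  have hLw : 2*(w:ℝ) < (L:ℝ) := by exact_mod_cast hL
  have hd0 : (((bad0 w L : Set (ZMod n))).ncard : ℝ) ≤ (2*(w:ℝ)-1)/(L:ℝ) * (n:ℝ) := by
    have h := bad0_ncard (n := n) w L hw hL hdvd
    have hL0 : (L:ℝ) ≠ 0 := ne_of_gt hLr
    have hcast : (((2*w-1) * (n/L) : ℕ) : ℝ) = (2*(w:ℝ)-1) * ((n:ℝ)/(L:ℝ)) := by
      rw [Nat.cast_mul, Nat.cast_sub (by omega : 1 ≤ 2*w), Nat.cast_div hdvd hL0]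
      push_cast; ring
    calc (((bad0 w L : Set (ZMod n))).ncard : ℝ)
        ≤ (((2*w-1) * (n/L) : ℕ) : ℝ) := by exact_mod_cast h
      _ = (2*(w:ℝ)-1) * ((n:ℝ)/(L:ℝ)) := hcast
      _ = (2*(w:ℝ)-1)/(L:ℝ) * (n:ℝ) := by ring
  have hd0nn : (0:ℝ) ≤ (((bad0 w L : Set (ZMod n))).ncard : ℝ) := Nat.cast_nonneg _
  constructor
  · -- expectation bound
    have hpow : (1 + 12*(w:ℝ)/n) ^ t ≤ Real.exp (12*(w:ℝ)*(t:ℝ)/(n:ℝ)) := by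
      have e1 : 1 + 12*(w:ℝ)/n ≤ Real.exp (12*(w:ℝ)/n) := by
        have := Real.add_one_le_exp (12*(w:ℝ)/n); linarith
      calc (1 + 12*(w:ℝ)/n) ^ t ≤ (Real.exp (12*(w:ℝ)/n)) ^ t :=
            pow_le_pow_left₀ (by positivity) e1 t
        _ = Real.exp ((t:ℝ) * (12*(w:ℝ)/n)) := by rw [← Real.exp_nat_mul]
        _ = Real.exp (12*(w:ℝ)*(t:ℝ)/(n:ℝ)) := by congr 1; ring
    calc ∫ ω, ((tainted w L (fun u => prop u ω) t).ncard : ℝ) ∂μ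
        = ∑ v : Fin t → ZMod n × ZMod n, wP v * ((Dfin w L v).ncard : ℝ) :=
          integral_reduction μ init prop hproc hn2 w L t (fun s => ((s.ncard : ℕ) : ℝ))
      _ ≤ (1 + 12*(w:ℝ)/n) ^ t * (((bad0 w L : Set (ZMod n))).ncard : ℝ) :=
          sum_card_le w L hw hL hdvd hn t
      _ ≤ Real.exp (12*(w:ℝ)*(t:ℝ)/(n:ℝ)) * (((bad0 w L : Set (ZMod n))).ncard : ℝ) :=
          mul_le_mul_of_nonneg_right hpow hd0nn
      _ ≤ Real.exp (12*(w:ℝ)*(t:ℝ)/(n:ℝ)) * ((2*(w:ℝ)-1)/(L:ℝ) * (n:ℝ)) :=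
          mul_le_mul_of_nonneg_left hd0 (le_of_lt (Real.exp_pos _))
      _ = Real.exp (12 * (w:ℝ) * (t:ℝ) / (n:ℝ)) * ((2 * (w:ℝ) - 1) / (L:ℝ)) * (n:ℝ) := by
          ring
  · -- probability bound
    rcases le_or_gt 1 (2 * Real.exp (12 * (w:ℝ) * (t:ℝ) / (n:ℝ)) * ((2 * (w:ℝ) - 1) / (L:ℝ)))
      with hA | hA
    · -- the event is empty
      have hempty : {ω | 2 * Real.exp (12 * (w:ℝ) * (t:ℝ) / (n:ℝ)) * ((2 * (w:ℝ) - 1) / (L:ℝ))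
            < ((tainted w L (fun u => prop u ω) t).ncard : ℝ) / (n:ℝ)} = ∅ := by
        apply Set.eq_empty_iff_forall_notMem.2
        intro ω hω
        rw [Set.mem_setOf_eq] at hω
        have h1 : (tainted w L (fun u => prop u ω) t).ncard ≤ n := by
          calc (tainted w L (fun u => prop u ω) t).ncard
              ≤ (Set.univ : Set (ZMod n)).ncard :=
                Set.ncard_le_ncard (Set.subset_univ _) (Set.toFinite _)
            _ = n := by rw [Set.ncard_univ, Nat.card_eq_fintype_card, ZMod.card]
        have hle : ((tainted w L (fun u => prop u ω) t).ncard : ℝ) ≤ (n:ℝ) := by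
          exact_mod_cast h1
        have h2 : ((tainted w L (fun u => prop u ω) t).ncard : ℝ) / (n:ℝ) ≤ 1 :=
          div_le_one_of_le₀ hle (le_of_lt hnr)
        linarith
      rw [hempty, measure_empty]
      exact zero_le
    · -- main case: the threshold is below 1
      obtain ⟨x, hx⟩ : ∃ x : ℝ, x = 12*(w:ℝ)*(t:ℝ)/(n:ℝ) := ⟨_, rfl⟩
      have hx0 : 0 ≤ x := by rw [hx]; positivity
      have hM1 : (1:ℝ) ≤ max x 1 := le_max_right x 1
      have hxM : x ≤ max x 1 := le_max_left x 1
      have hM0 : (0:ℝ) < max x 1 := by linarith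
      obtain ⟨θ, hθdef⟩ : ∃ θ : ℝ, θ = 1/(42*(w:ℝ)*(max x 1)) := ⟨_, rfl⟩
      have hθ0 : 0 < θ := by rw [hθdef]; positivity
      have hθc : θ * (4*(w:ℝ)+2) ≤ 1/7 := by
        rw [hθdef]
        have h1 : 1/(42*(w:ℝ)*(max x 1))*(4*(w:ℝ)+2)
            = (4*(w:ℝ)+2)/(42*(w:ℝ)*(max x 1)) := by ring
        rw [h1, div_le_div_iff₀ (by positivity) (by norm_num : (0:ℝ) < 7)]
        nlinarith
      -- the exponential bound from hA
      have hExdiv : Real.exp x < (L:ℝ)/(2*(2*(w:ℝ)-1)) := by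
        rw [lt_div_iff₀ (by linarith : (0:ℝ) < 2*(2*(w:ℝ)-1))]
        have h1 : 2 * Real.exp x * ((2 * (w:ℝ) - 1) / (L:ℝ)) < 1 := by rw [hx]; exact hA
        have h2 : 2 * Real.exp x * ((2 * (w:ℝ) - 1) / (L:ℝ)) * (L:ℝ) < 1 * (L:ℝ) :=
          mul_lt_mul_of_pos_right h1 hLr
        have h3 : 2 * Real.exp x * ((2 * (w:ℝ) - 1) / (L:ℝ)) * (L:ℝ)
            = Real.exp x * (2*(2*(w:ℝ)-1)) := by field_simp
        linarith [h3 ▸ h2]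
      have hxQ : x ≤ (L:ℝ)/(2*(2*(w:ℝ)-1)) - 1 := by
        have hQpos : (0:ℝ) < (L:ℝ)/(2*(2*(w:ℝ)-1)) := by positivity
        have hlog := (Real.lt_log_iff_exp_lt hQpos).2 hExdiv
        have := Real.log_le_sub_one_of_pos hQpos
        linarith
      -- the key polynomial inequality
      have hM36 : 63*(w:ℝ)^2*(max x 1) ≤ 36*(L:ℝ)*(2*(w:ℝ)-1) := by
        have hLw1 : 2*(w:ℝ)+1 ≤ (L:ℝ) := by exact_mod_cast (by omega : 2*w+1 ≤ L)
        rcases le_or_gt x 1 with hxle | hxgt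
        · rw [max_eq_right hxle]
          nlinarith
        · rw [max_eq_left (le_of_lt hxgt)]
          have hx2 : x * (2*(2*(w:ℝ)-1)) ≤ (L:ℝ) := by
            have h1 : (0:ℝ) < 2*(2*(w:ℝ)-1) := by linarith
            have h2 : x * (2*(2*(w:ℝ)-1)) ≤ ((L:ℝ)/(2*(2*(w:ℝ)-1)) - 1) * (2*(2*(w:ℝ)-1)) :=
              mul_le_mul_of_nonneg_right hxQ (le_of_lt h1)
            have h3 : ((L:ℝ)/(2*(2*(w:ℝ)-1)) - 1) * (2*(2*(w:ℝ)-1))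
                = (L:ℝ) - 2*(2*(w:ℝ)-1) := by field_simp
            linarith
          have h5 : (w:ℝ)^2 ≤ (2*(w:ℝ)-1)^2 := by nlinarith
          have h6 := mul_le_mul_of_nonneg_right h5 hx0
          have h7 := mul_le_mul_of_nonneg_right hx2
            (by linarith : (0:ℝ) ≤ 36*(2*(w:ℝ)-1))
          have h8 : (0:ℝ) ≤ x*(2*(w:ℝ)-1)^2 := by positivity
          have h9 : (0:ℝ) ≤ (L:ℝ)*(2*(w:ℝ)-1) := by positivity
          linarith
      have hkey : (w:ℝ)*(n:ℝ)/(36*(L:ℝ)^2) ≤ (2/3)*(θ * ((2*(w:ℝ)-1)/(L:ℝ)*(n:ℝ))) := by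
        have hR : (2/3)*(θ * ((2*(w:ℝ)-1)/(L:ℝ)*(n:ℝ)))
            = ((2*(w:ℝ)-1)*(n:ℝ)) / (63*(w:ℝ)*(max x 1)*(L:ℝ)) := by
          rw [hθdef]; field_simp; ring
        rw [hR, div_le_div_iff₀ (by positivity) (by positivity)]
        have h := mul_le_mul_of_nonneg_right hM36 (mul_nonneg hnr.le hLr.le)
        linarith
      -- Chernoff bound on the finite sum
      have hθt0 : 0 ≤ θ * Real.exp (-((12*(w:ℝ) + 84*(w:ℝ)^2*θ) * (t:ℝ)) / (n:ℝ)) := by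
        positivity
      have hsumexp := sum_exp_le w L hw hL hdvd hn θ (le_of_lt hθ0) hθc t
        (θ * Real.exp (-((12*(w:ℝ) + 84*(w:ℝ)^2*θ) * (t:ℝ)) / (n:ℝ))) hθt0 le_rfl
      have hmeas := measure_reduction μ init prop hproc hn2 w L t
        (fun s => 2 * Real.exp (12 * (w:ℝ) * (t:ℝ) / (n:ℝ)) * ((2 * (w:ℝ) - 1) / (L:ℝ))
          < ((s.ncard : ℕ) : ℝ) / (n:ℝ))
      -- Markov over the finite sum
      have hmarkov : ∑ v ∈ ({v : Fin t → ZMod n × ZMod n |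
            2 * Real.exp (12 * (w:ℝ) * (t:ℝ) / (n:ℝ)) * ((2 * (w:ℝ) - 1) / (L:ℝ))
              < (((Dfin w L v).ncard : ℕ) : ℝ) / (n:ℝ)}).toFinite.toFinset, wP v
          ≤ Real.exp (θ * (((bad0 w L : Set (ZMod n))).ncard : ℝ))
            * Real.exp (-(θ * Real.exp (-((12*(w:ℝ) + 84*(w:ℝ)^2*θ) * (t:ℝ)) / (n:ℝ))
              * (2 * Real.exp x * ((2*(w:ℝ)-1)/(L:ℝ)*(n:ℝ))))) := by
        have hA' : ∀ v ∈ ({v : Fin t → ZMod n × ZMod n |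
            2 * Real.exp (12 * (w:ℝ) * (t:ℝ) / (n:ℝ)) * ((2 * (w:ℝ) - 1) / (L:ℝ))
              < (((Dfin w L v).ncard : ℕ) : ℝ) / (n:ℝ)}).toFinite.toFinset,
            2 * Real.exp x * ((2*(w:ℝ)-1)/(L:ℝ)*(n:ℝ)) ≤ ((Dfin w L v).ncard : ℝ) := by
          intro v hv
          rw [Set.Finite.mem_toFinset, Set.mem_setOf_eq] at hv
          have h1 : 2 * Real.exp x * ((2 * (w:ℝ) - 1) / (L:ℝ))
              < ((Dfin w L v).ncard : ℝ) / (n:ℝ) := by rw [hx]; exact hv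
          have h2 := (lt_div_iff₀ hnr).1 h1
          calc 2 * Real.exp x * ((2*(w:ℝ)-1)/(L:ℝ)*(n:ℝ))
              = 2 * Real.exp x * ((2 * (w:ℝ) - 1) / (L:ℝ)) * (n:ℝ) := by ring
            _ ≤ ((Dfin w L v).ncard : ℝ) := le_of_lt h2
        calc ∑ v ∈ ({v : Fin t → ZMod n × ZMod n |
              2 * Real.exp (12 * (w:ℝ) * (t:ℝ) / (n:ℝ)) * ((2 * (w:ℝ) - 1) / (L:ℝ))
                < (((Dfin w L v).ncard : ℕ) : ℝ) / (n:ℝ)}).toFinite.toFinset, wP v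
            ≤ ∑ v ∈ ({v : Fin t → ZMod n × ZMod n |
              2 * Real.exp (12 * (w:ℝ) * (t:ℝ) / (n:ℝ)) * ((2 * (w:ℝ) - 1) / (L:ℝ))
                < (((Dfin w L v).ncard : ℕ) : ℝ) / (n:ℝ)}).toFinite.toFinset,
              wP v * Real.exp (θ * Real.exp (-((12*(w:ℝ) + 84*(w:ℝ)^2*θ) * (t:ℝ)) / (n:ℝ))
                * ((Dfin w L v).ncard : ℝ))
                * Real.exp (-(θ * Real.exp (-((12*(w:ℝ) + 84*(w:ℝ)^2*θ) * (t:ℝ)) / (n:ℝ))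
                  * (2 * Real.exp x * ((2*(w:ℝ)-1)/(L:ℝ)*(n:ℝ))))) := by
              refine Finset.sum_le_sum fun v hv => ?_
              have h1 := hA' v hv
              have h2 : (1:ℝ) ≤ Real.exp (θ * Real.exp (-((12*(w:ℝ) + 84*(w:ℝ)^2*θ)
                  * (t:ℝ)) / (n:ℝ)) * ((Dfin w L v).ncard : ℝ))
                  * Real.exp (-(θ * Real.exp (-((12*(w:ℝ) + 84*(w:ℝ)^2*θ) * (t:ℝ)) / (n:ℝ))
                    * (2 * Real.exp x * ((2*(w:ℝ)-1)/(L:ℝ)*(n:ℝ))))) := by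
                rw [← Real.exp_add]
                apply Real.one_le_exp
                have h3 : 0 ≤ θ * Real.exp (-((12*(w:ℝ) + 84*(w:ℝ)^2*θ) * (t:ℝ)) / (n:ℝ))
                    * (((Dfin w L v).ncard : ℝ)
                      - 2 * Real.exp x * ((2*(w:ℝ)-1)/(L:ℝ)*(n:ℝ))) :=
                  mul_nonneg hθt0 (by linarith)
                nlinarith
              calc wP v = wP v * 1 := by ring
                _ ≤ wP v * (Real.exp (θ * Real.exp (-((12*(w:ℝ) + 84*(w:ℝ)^2*θ)
                      * (t:ℝ)) / (n:ℝ)) * ((Dfin w L v).ncard : ℝ))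
                    * Real.exp (-(θ * Real.exp (-((12*(w:ℝ) + 84*(w:ℝ)^2*θ) * (t:ℝ)) / (n:ℝ))
                      * (2 * Real.exp x * ((2*(w:ℝ)-1)/(L:ℝ)*(n:ℝ)))))) :=
                  mul_le_mul_of_nonneg_left h2 (wP_nonneg v)
                _ = wP v * Real.exp (θ * Real.exp (-((12*(w:ℝ) + 84*(w:ℝ)^2*θ)
                      * (t:ℝ)) / (n:ℝ)) * ((Dfin w L v).ncard : ℝ))
                    * Real.exp (-(θ * Real.exp (-((12*(w:ℝ) + 84*(w:ℝ)^2*θ) * (t:ℝ)) / (n:ℝ))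
                      * (2 * Real.exp x * ((2*(w:ℝ)-1)/(L:ℝ)*(n:ℝ))))) := by ring
          _ = (∑ v ∈ ({v : Fin t → ZMod n × ZMod n |
              2 * Real.exp (12 * (w:ℝ) * (t:ℝ) / (n:ℝ)) * ((2 * (w:ℝ) - 1) / (L:ℝ))
                < (((Dfin w L v).ncard : ℕ) : ℝ) / (n:ℝ)}).toFinite.toFinset,
              wP v * Real.exp (θ * Real.exp (-((12*(w:ℝ) + 84*(w:ℝ)^2*θ) * (t:ℝ)) / (n:ℝ))
                * ((Dfin w L v).ncard : ℝ)))
                * Real.exp (-(θ * Real.exp (-((12*(w:ℝ) + 84*(w:ℝ)^2*θ) * (t:ℝ)) / (n:ℝ))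
                  * (2 * Real.exp x * ((2*(w:ℝ)-1)/(L:ℝ)*(n:ℝ))))) := by
              rw [← Finset.sum_mul]
          _ ≤ (∑ v : Fin t → ZMod n × ZMod n,
              wP v * Real.exp (θ * Real.exp (-((12*(w:ℝ) + 84*(w:ℝ)^2*θ) * (t:ℝ)) / (n:ℝ))
                * ((Dfin w L v).ncard : ℝ)))
                * Real.exp (-(θ * Real.exp (-((12*(w:ℝ) + 84*(w:ℝ)^2*θ) * (t:ℝ)) / (n:ℝ))
                  * (2 * Real.exp x * ((2*(w:ℝ)-1)/(L:ℝ)*(n:ℝ))))) := by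
              apply mul_le_mul_of_nonneg_right _ (le_of_lt (Real.exp_pos _))
              apply Finset.sum_le_sum_of_subset_of_nonneg (Finset.subset_univ _)
              intro v _ _
              exact mul_nonneg (wP_nonneg v) (le_of_lt (Real.exp_pos _))
          _ ≤ Real.exp (θ * (((bad0 w L : Set (ZMod n))).ncard : ℝ))
                * Real.exp (-(θ * Real.exp (-((12*(w:ℝ) + 84*(w:ℝ)^2*θ) * (t:ℝ)) / (n:ℝ))
                  * (2 * Real.exp x * ((2*(w:ℝ)-1)/(L:ℝ)*(n:ℝ))))) :=
              mul_le_mul_of_nonneg_right hsumexp (le_of_lt (Real.exp_pos _))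
      -- numeric comparison of the exponents
      have hexpo : Real.exp (θ * (((bad0 w L : Set (ZMod n))).ncard : ℝ))
            * Real.exp (-(θ * Real.exp (-((12*(w:ℝ) + 84*(w:ℝ)^2*θ) * (t:ℝ)) / (n:ℝ))
              * (2 * Real.exp x * ((2*(w:ℝ)-1)/(L:ℝ)*(n:ℝ)))))
          ≤ Real.exp (-((w:ℝ) * (n:ℝ)) / (36 * (L:ℝ)^2)) := by
        rw [← Real.exp_add]
        apply Real.exp_le_exp.2
        have hκt : ((12*(w:ℝ) + 84*(w:ℝ)^2*θ) * (t:ℝ)) / (n:ℝ) = x + 7*(w:ℝ)*θ*x := by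
          rw [hx]; field_simp; ring
        have hprod : Real.exp (-((12*(w:ℝ) + 84*(w:ℝ)^2*θ) * (t:ℝ)) / (n:ℝ)) * Real.exp x
            = Real.exp (-(7*(w:ℝ)*θ*x)) := by
          rw [← Real.exp_add]
          congr 1
          rw [neg_div, hκt]
          ring
        have h7 : 7*(w:ℝ)*θ*x ≤ 1/6 := by
          have he : 7*(w:ℝ)*θ*x = x/(6*(max x 1)) := by rw [hθdef]; field_simp; ring
          rw [he, div_le_div_iff₀ (by positivity) (by norm_num : (0:ℝ) < 6)]
          linarith
        have hexp5 : (5:ℝ)/6 ≤ Real.exp (-(7*(w:ℝ)*θ*x)) := by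
          have := Real.add_one_le_exp (-(7*(w:ℝ)*θ*x))
          linarith
        have hterm : (5:ℝ)/3 * (θ * ((2*(w:ℝ)-1)/(L:ℝ)*(n:ℝ)))
            ≤ θ * Real.exp (-((12*(w:ℝ) + 84*(w:ℝ)^2*θ) * (t:ℝ)) / (n:ℝ))
              * (2 * Real.exp x * ((2*(w:ℝ)-1)/(L:ℝ)*(n:ℝ))) := by
          have hd0rpos : (0:ℝ) ≤ (2*(w:ℝ)-1)/(L:ℝ)*(n:ℝ) := by positivity
          have h1 : θ * Real.exp (-((12*(w:ℝ) + 84*(w:ℝ)^2*θ) * (t:ℝ)) / (n:ℝ))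
              * (2 * Real.exp x * ((2*(w:ℝ)-1)/(L:ℝ)*(n:ℝ)))
              = 2 * θ * ((2*(w:ℝ)-1)/(L:ℝ)*(n:ℝ))
                * (Real.exp (-((12*(w:ℝ) + 84*(w:ℝ)^2*θ) * (t:ℝ)) / (n:ℝ)) * Real.exp x) := by
            ring
          rw [h1, hprod]
          have h2 : 2 * θ * ((2*(w:ℝ)-1)/(L:ℝ)*(n:ℝ)) * (5/6)
              ≤ 2 * θ * ((2*(w:ℝ)-1)/(L:ℝ)*(n:ℝ)) * Real.exp (-(7*(w:ℝ)*θ*x)) := by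
            apply mul_le_mul_of_nonneg_left hexp5
            positivity
          linarith
        have hbd0 : θ * (((bad0 w L : Set (ZMod n))).ncard : ℝ)
            ≤ θ * ((2*(w:ℝ)-1)/(L:ℝ)*(n:ℝ)) :=
          mul_le_mul_of_nonneg_left hd0 (le_of_lt hθ0)
        have hfin : -((w:ℝ) * (n:ℝ)) / (36 * (L:ℝ)^2)
            = -((w:ℝ) * (n:ℝ) / (36 * (L:ℝ)^2)) := by ring
        rw [hfin]
        linarith
      calc μ {ω | 2 * Real.exp (12 * (w:ℝ) * (t:ℝ) / (n:ℝ)) * ((2 * (w:ℝ) - 1) / (L:ℝ))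
            < ((tainted w L (fun u => prop u ω) t).ncard : ℝ) / (n:ℝ)}
          = ENNReal.ofReal (∑ v ∈ ({v : Fin t → ZMod n × ZMod n |
              2 * Real.exp (12 * (w:ℝ) * (t:ℝ) / (n:ℝ)) * ((2 * (w:ℝ) - 1) / (L:ℝ))
                < (((Dfin w L v).ncard : ℕ) : ℝ) / (n:ℝ)}).toFinite.toFinset, wP v) := hmeas
        _ ≤ ENNReal.ofReal (Real.exp (-((w:ℝ) * (n:ℝ)) / (36 * (L:ℝ)^2))) := by
            apply ENNReal.ofReal_le_ofReal
            exact le_trans hmarkov hexpo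

end Schelling
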